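/- arXiv:2110.01897 — 2 statements merged into one kernel-verified Lean document; each statement's English description precedes it below -/
import Mathlib

section
/- Let H be a connected triangle-free graph with maximum degree at most three and at least 7 vertices. Then there exist t ∈ ℕ and a partition V(H) = B₁ ∪ ⋯ ∪ B_t such that: (1) for each i, the subgraph of H induced by B_i is either a path or a cycle of length at least five; and (2) for every i ∈ {2,…,t}, each vertex of B_i has at most one neighbour in B₁ ∪ ⋯ ∪ B_{i−1}. -/
set_option linter.unusedSectionVars false
set_option maxHeartbeats 1600000

open Finset

namespace TFCD

variable {ι : Type*} [DecidableEq ι]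

/-- `l` lists the vertices of an induced path of `H`, in order. -/
def IsIndPathList (H : SimpleGraph ι) (l : List ι) : Prop :=
  l.Nodup ∧ ∀ i j : ℕ, ∀ hij : i < j, ∀ hj : j < l.length,
    (H.Adj (l[i]'(hij.trans hj)) (l[j]'hj) ↔ j = i + 1)

/-- `l` lists the vertices of an induced cycle of `H`, in order. -/
def IsIndCycleList (H : SimpleGraph ι) (l : List ι) : Prop :=
  l.Nodup ∧ ∀ i j : ℕ, ∀ hij : i < j, ∀ hj : j < l.length,
    (H.Adj (l[i]'(hij.trans hj)) (l[j]'hj) ↔ (j = i + 1 ∨ (i = 0 ∧ j = l.length - 1)))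

lemma path_adj_iff {H : SimpleGraph ι} {l : List ι} (hl : IsIndPathList H l)
    {i j : ℕ} (hi : i < l.length) (hj : j < l.length) :
    H.Adj (l[i]'hi) (l[j]'hj) ↔ (j = i + 1 ∨ i = j + 1) := by
  rcases lt_trichotomy i j with h | h | h
  · rw [hl.2 i j h hj]; omega
  · subst h
    simp only [SimpleGraph.irrefl, false_iff]
    omega
  · rw [SimpleGraph.adj_comm, hl.2 j i h hi]; omega

lemma cycle_adj_iff {H : SimpleGraph ι} {l : List ι} (hl : IsIndCycleList H l)
    (hlen : 3 ≤ l.length) {i j : ℕ} (hi : i < l.length) (hj : j < l.length) :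
    H.Adj (l[i]'hi) (l[j]'hj) ↔
      (j = i + 1 ∨ i = j + 1 ∨ (i = 0 ∧ j = l.length - 1) ∨ (j = 0 ∧ i = l.length - 1)) := by
  rcases lt_trichotomy i j with h | h | h
  · rw [hl.2 i j h hj]; omega
  · subst h
    simp only [SimpleGraph.irrefl, false_iff]
    omega
  · rw [SimpleGraph.adj_comm, hl.2 j i h hi]; omega

/-- The equivalence between the vertices of `l.toFinset` and `Fin l.length`. -/
noncomputable def listEquiv (l : List ι) (hnd : l.Nodup) :
    (l.toFinset : Set ι) ≃ Fin l.length where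
  toFun x := ⟨List.idxOf x.1 l, List.idxOf_lt_length_iff.2 (by
      have := x.2; simpa using this)⟩
  invFun i := ⟨l[i.1], by simp [List.mem_toFinset]⟩
  left_inv x := Subtype.ext (List.getElem_idxOf _)
  right_inv i := Fin.ext (List.Nodup.idxOf_getElem hnd _ _)

lemma listEquiv_coe (l : List ι) (hnd : l.Nodup) (x : (l.toFinset : Set ι)) :
    l[(listEquiv l hnd x).1]'(listEquiv l hnd x).2 = x.1 := by
  exact List.getElem_idxOf (listEquiv l hnd x).2

lemma indPathList_iso {H : SimpleGraph ι} {l : List ι} (hl : IsIndPathList H l) :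
    Nonempty (H.induce (l.toFinset : Set ι) ≃g SimpleGraph.pathGraph l.length) := by
  refine ⟨⟨listEquiv l hl.1, ?_⟩⟩
  intro a b
  rw [SimpleGraph.pathGraph_adj]
  have ha := listEquiv_coe l hl.1 a
  have hb := listEquiv_coe l hl.1 b
  set ia := listEquiv l hl.1 a with hia
  set ib := listEquiv l hl.1 b with hib
  have key : H.Adj (a : ι) (b : ι) ↔ (ib.1 = ia.1 + 1 ∨ ia.1 = ib.1 + 1) := by
    rw [← ha, ← hb]
    exact path_adj_iff hl ia.2 ib.2
  have : (H.induce (l.toFinset : Set ι)).Adj a b ↔ H.Adj (a : ι) (b : ι) := Iff.rfl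
  rw [this, key]
  omega

lemma indCycleList_iso {H : SimpleGraph ι} {l : List ι} (hl : IsIndCycleList H l)
    (hlen : 5 ≤ l.length) :
    Nonempty (H.induce (l.toFinset : Set ι) ≃g SimpleGraph.cycleGraph l.length) := by
  refine ⟨⟨listEquiv l hl.1, ?_⟩⟩
  intro a b
  rw [SimpleGraph.cycleGraph_adj']
  have ha := listEquiv_coe l hl.1 a
  have hb := listEquiv_coe l hl.1 b
  set ia := listEquiv l hl.1 a with hia
  set ib := listEquiv l hl.1 b with hib
  have key : H.Adj (a : ι) (b : ι) ↔
      (ib.1 = ia.1 + 1 ∨ ia.1 = ib.1 + 1 ∨ (ia.1 = 0 ∧ ib.1 = l.length - 1)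
        ∨ (ib.1 = 0 ∧ ia.1 = l.length - 1)) := by
    rw [← ha, ← hb]
    exact cycle_adj_iff hl (by omega) ia.2 ib.2
  have hiff : (H.induce (l.toFinset : Set ι)).Adj a b ↔ H.Adj (a : ι) (b : ι) := Iff.rfl
  rw [hiff, key]
  have h1 : ((ia - ib : Fin l.length) : ℕ) = (l.length - ib.1 + ia.1) % l.length := by
    rw [Fin.sub_def]
  have h2 : ((ib - ia : Fin l.length) : ℕ) = (l.length - ia.1 + ib.1) % l.length := by
    rw [Fin.sub_def]
  rw [h1, h2]
  have hA := ia.2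
  have hB := ib.2
  rcases lt_trichotomy ia.1 ib.1 with h | h | h
  · have e1 : (l.length - ib.1 + ia.1) % l.length = l.length - (ib.1 - ia.1) := by
      rw [Nat.mod_eq_of_lt (by omega)]
      omega
    have e2 : (l.length - ia.1 + ib.1) % l.length = ib.1 - ia.1 := by
      have : l.length - ia.1 + ib.1 = (ib.1 - ia.1) + l.length := by omega
      rw [this, Nat.add_mod_right, Nat.mod_eq_of_lt (by omega)]
    rw [e1, e2]
    omega
  · rw [h]
    simp only [Nat.sub_add_cancel hB.le, Nat.mod_self]
    omega
  · have e1 : (l.length - ib.1 + ia.1) % l.length = ia.1 - ib.1 := by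
      have : l.length - ib.1 + ia.1 = (ia.1 - ib.1) + l.length := by omega
      rw [this, Nat.add_mod_right, Nat.mod_eq_of_lt (by omega)]
    have e2 : (l.length - ia.1 + ib.1) % l.length = l.length - (ia.1 - ib.1) := by
      rw [Nat.mod_eq_of_lt (by omega)]
      omega
    rw [e1, e2]
    omega


variable {ι : Type*} [DecidableEq ι] [Fintype ι]

section helpers
variable (H : SimpleGraph ι) [DecidableRel H.Adj]

lemma deg_bound (hdeg : ∀ v, (H.neighborSet v).ncard ≤ 3) (S : Finset ι) (v : ι) :
    (S.filter (H.Adj v)).card ≤ 3 := by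
  have h1 : ((S.filter (H.Adj v) : Finset ι) : Set ι) ⊆ H.neighborSet v := by
    intro w hw
    simp only [coe_filter, Set.mem_setOf_eq] at hw
    exact hw.2
  calc (S.filter (H.Adj v)).card = ((S.filter (H.Adj v) : Finset ι) : Set ι).ncard := by
        rw [Set.ncard_coe_finset]
    _ ≤ (H.neighborSet v).ncard := Set.ncard_le_ncard h1 (Set.toFinite _)
    _ ≤ 3 := hdeg v

lemma no_triangle (htf : H.CliqueFree 3) {a b c : ι} (hab : H.Adj a b) (hac : H.Adj a c)
    (hbc : H.Adj b c) : False :=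
  htf {a, b, c} (SimpleGraph.is3Clique_triple_iff.2 ⟨hab, hac, hbc⟩)

def Good (S : Finset ι) (l : List ι) : Prop :=
  IsIndPathList H l ∧ (∀ x ∈ l, x ∈ S) ∧ l ≠ []

lemma good_singleton {S : Finset ι} {v : ι} (hv : v ∈ S) : Good H S [v] := by
  refine ⟨⟨by simp, ?_⟩, by simp [hv], by simp⟩
  intro i j hij hj
  simp at hj
  omega

lemma exists_maximal (S : Finset ι) (hS : S.Nonempty) :
    ∃ l, Good H S l ∧ ∀ l', Good H S l' → l'.length ≤ l.length := by
  classical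
  obtain ⟨v, hv⟩ := hS
  have hne : Nonempty ι := ⟨v⟩
  set P : ℕ → Prop := fun n => ∃ l, Good H S l ∧ l.length = n with hP
  have h1 : P 1 := ⟨[v], good_singleton H hv, rfl⟩
  have hbd : ∀ l, Good H S l → l.length ≤ Fintype.card ι := fun l hl =>
    hl.1.1.length_le_card
  have h1c : 1 ≤ Fintype.card ι := Fintype.card_pos
  obtain ⟨l, hl, hlen⟩ := Nat.findGreatest_spec (P := P) h1c h1
  refine ⟨l, hl, fun l' hl' => ?_⟩
  by_contra hcon
  push_neg at hcon
  exact Nat.findGreatest_is_greatest (hlen ▸ hcon) (hbd l' hl') ⟨l', hl', rfl⟩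

lemma isIndPathList_pair {a b : ι} (hab : H.Adj a b) : IsIndPathList H [a, b] := by
  refine ⟨by simp [hab.ne], ?_⟩
  intro i j hij hj
  simp only [List.length_cons, List.length_nil] at hj
  have hj2 : j < 2 := by omega
  interval_cases j <;> interval_cases i <;> simp_all

lemma isIndPathList_triple {a b c : ι} (hab : H.Adj a b) (hbc : H.Adj b c)
    (hac : ¬H.Adj a c) (hac' : a ≠ c) : IsIndPathList H [a, b, c] := by
  refine ⟨by simp [hab.ne, hbc.ne, hac'], ?_⟩
  intro i j hij hj
  simp only [List.length_cons, List.length_nil] at hj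
  have hj2 : j < 3 := by omega
  interval_cases j <;> interval_cases i <;> simp_all

lemma isIndPathList_quad {a b c d : ι} (hab : H.Adj a b) (hbc : H.Adj b c) (hcd : H.Adj c d)
    (hac : ¬H.Adj a c) (had : ¬H.Adj a d) (hbd : ¬H.Adj b d)
    (hac' : a ≠ c) (had' : a ≠ d) (hbd' : b ≠ d) : IsIndPathList H [a, b, c, d] := by
  refine ⟨by simp [hab.ne, hbc.ne, hcd.ne, hac', had', hbd'], ?_⟩
  intro i j hij hj
  simp only [List.length_cons, List.length_nil] at hj
  have hj2 : j < 4 := by omega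
  interval_cases j <;> interval_cases i <;> simp_all

lemma out_card_le_one (hdeg : ∀ v, (H.neighborSet v).ncard ≤ 3) {S P : Finset ι} {v a b : ι}
    (hPS : P ⊆ S) (hab : a ≠ b) (ha : H.Adj v a) (hb : H.Adj v b)
    (haP : a ∈ P) (hbP : b ∈ P) : ((S \ P).filter (H.Adj v)).card ≤ 1 := by
  have hsub : (S \ P).filter (H.Adj v) ⊆ ((S.filter (H.Adj v)).erase a).erase b := by
    intro w hw
    simp only [mem_filter, mem_sdiff] at hw
    refine mem_erase.2 ⟨fun h => hw.1.2 (h ▸ hbP), mem_erase.2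
      ⟨fun h => hw.1.2 (h ▸ haP), mem_filter.2 ⟨hw.1.1, hw.2⟩⟩⟩
  have hbm : b ∈ (S.filter (H.Adj v)).erase a :=
    mem_erase.2 ⟨hab.symm, mem_filter.2 ⟨hPS hbP, hb⟩⟩
  have ham : a ∈ S.filter (H.Adj v) := mem_filter.2 ⟨hPS haP, ha⟩
  have := card_le_card hsub
  rw [card_erase_of_mem hbm, card_erase_of_mem ham] at this
  have h3 := deg_bound H hdeg S v
  omega

lemma cycle_of_attach {l : List ι} (hl : IsIndPathList H l) {y : ι} (hy : y ∉ l) {j : ℕ}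
    (hj : j < l.length) (hy0 : H.Adj y (l[0]'(by omega))) (hyj : H.Adj y (l[j]'hj))
    (hmin : ∀ m, ∀ _ : 0 < m, ∀ _ : m < j, ¬H.Adj y (l[m]'(by omega)))
    (h3 : 3 ≤ j) : IsIndCycleList H (y :: l.take (j + 1)) := by
  have hlen : (y :: l.take (j + 1)).length = j + 2 := by
    simp [List.length_take]
    omega
  have hget : ∀ i : ℕ, ∀ h : i < j + 1, (l.take (j+1))[i]'(by simp [List.length_take]; omega) = l[i]'(by omega) := by
    intro i h
    rw [List.getElem_take]
  constructor
  · refine List.Nodup.cons ?_ (hl.1.sublist (List.take_sublist _ _))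
    intro hmem
    exact hy (List.mem_of_mem_take hmem)
  · intro i j' hij hj'
    rw [hlen] at hj'
    have hj'1 : j' - 1 < j + 1 := by omega
    rcases Nat.eq_zero_or_pos i with hi0 | hipos
    · subst hi0
      obtain ⟨k, rfl⟩ : ∃ k, j' = k + 1 := ⟨j' - 1, by omega⟩
      have he : (y :: l.take (j+1))[k+1]'(by rw [hlen]; omega) = l[k]'(by omega) := by
        simpa using hget k (by omega)
      have he0 : (y :: l.take (j+1))[0]'(by rw [hlen]; omega) = y := rfl
      rw [he0, he]
      constructor
      · intro hadj
        rcases Nat.lt_trichotomy k j with h | h | h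
        · rcases Nat.eq_zero_or_pos k with h0 | h0
          · omega
          · exact absurd hadj (hmin _ h0 h)
        · omega
        · omega
      · intro hor
        rcases hor with h | h
        · have hk : k = 0 := by omega
          subst hk
          exact hy0
        · have hk : k = j := by omega
          subst hk
          exact hyj
    · obtain ⟨i2, rfl⟩ : ∃ k, i = k + 1 := ⟨i - 1, by omega⟩
      obtain ⟨k, rfl⟩ : ∃ k, j' = k + 1 := ⟨j' - 1, by omega⟩
      have hei : (y :: l.take (j+1))[i2+1]'(by rw [hlen]; omega) = l[i2]'(by omega) := by
        simpa using hget i2 (by omega)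
      have hej : (y :: l.take (j+1))[k+1]'(by rw [hlen]; omega) = l[k]'(by omega) := by
        simpa using hget k (by omega)
      rw [hei, hej]
      rw [hl.2 i2 k (by omega) (by omega)]
      omega

end helpers
section peelhelpers
variable (H : SimpleGraph ι) [DecidableRel H.Adj]

/-- A valid block to peel off from `S` (as the last block). -/
def Peel (S P : Finset ι) : Prop :=
  P.Nonempty ∧ P ⊆ S ∧
    ((∃ m, Nonempty (H.induce (P : Set ι) ≃g SimpleGraph.pathGraph m)) ∨
     (∃ m, 5 ≤ m ∧ Nonempty (H.induce (P : Set ι) ≃g SimpleGraph.cycleGraph m))) ∧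
    ∀ v ∈ P, ((S \ P).filter (H.Adj v)).card ≤ 1

lemma good_cons {S : Finset ι} {l : List ι} (hg : Good H S l) {y : ι} (hyS : y ∈ S)
    (hy : y ∉ l) (h0 : 0 < l.length) (hadj : H.Adj y (l[0]'h0))
    (hno : ∀ m, ∀ _ : m < l.length, ∀ _ : 0 < m, ¬H.Adj y (l[m]'‹_›)) :
    Good H S (y :: l) := by
  obtain ⟨⟨hnd, hcond⟩, hmem, hne⟩ := hg
  refine ⟨⟨List.Nodup.cons hy hnd, ?_⟩, ?_, by simp⟩
  · intro i j hij hj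
    simp only [List.length_cons] at hj
    rcases Nat.eq_zero_or_pos i with hi0 | hipos
    · subst hi0
      obtain ⟨k, rfl⟩ : ∃ k, j = k + 1 := ⟨j - 1, by omega⟩
      have he : (y :: l)[k+1]'(by simpa using hj) = l[k]'(by omega) := by simp
      rw [show (y :: l)[0]'(by simp) = y from rfl, he]
      rcases Nat.eq_zero_or_pos k with hk0 | hkpos
      · subst hk0
        simpa using hadj
      · constructor
        · intro hcontra
          exact absurd hcontra (hno k (by omega) hkpos)
        · omega
    · obtain ⟨i2, rfl⟩ : ∃ k, i = k + 1 := ⟨i - 1, by omega⟩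
      obtain ⟨k, rfl⟩ : ∃ k, j = k + 1 := ⟨j - 1, by omega⟩
      have hei : (y :: l)[i2+1]'(by simp; omega) = l[i2]'(by omega) := by simp
      have hej : (y :: l)[k+1]'(by simpa using hj) = l[k]'(by omega) := by simp
      rw [hei, hej, hcond i2 k (by omega) (by omega)]
      omega
  · intro x hx
    rcases List.mem_cons.1 hx with rfl | hx
    · exact hyS
    · exact hmem x hx

lemma isIndPathList_reverse {l : List ι} (hl : IsIndPathList H l) :
    IsIndPathList H l.reverse := by
  refine ⟨List.nodup_reverse.2 hl.1, ?_⟩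
  intro i j hij hj
  simp only [List.length_reverse] at hj
  have h1 : l.reverse[i]'(by simpa using hij.trans hj) = l[l.length - 1 - i]'(by omega) :=
    List.getElem_reverse _
  have h2 : l.reverse[j]'(by simpa using hj) = l[l.length - 1 - j]'(by omega) :=
    List.getElem_reverse _
  rw [h1, h2, path_adj_iff hl (by omega) (by omega)]
  omega

lemma good_reverse {S : Finset ι} {l : List ι} (hg : Good H S l) : Good H S l.reverse :=
  ⟨isIndPathList_reverse H hg.1, fun x hx => hg.2.1 x (List.mem_reverse.1 hx),
    fun h => hg.2.2 (by simpa using congrArg List.reverse h)⟩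

lemma toFinset_subset_of_forall {S : Finset ι} {l : List ι} (h : ∀ x ∈ l, x ∈ S) :
    l.toFinset ⊆ S := fun x hx => h x (List.mem_toFinset.1 hx)

lemma path_peel (hdeg : ∀ v, (H.neighborSet v).ncard ≤ 3) {S : Finset ι} {l : List ι}
    (hl : IsIndPathList H l) (hne : 0 < l.length) (hS : ∀ x ∈ l, x ∈ S)
    (h0 : ((S \ l.toFinset).filter (H.Adj (l[0]'hne))).card ≤ 1)
    (h1 : ((S \ l.toFinset).filter (H.Adj (l[l.length - 1]'(by omega)))).card ≤ 1) :
    Peel H S l.toFinset := by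
  have hne0 : l ≠ [] := List.ne_nil_of_length_pos hne
  refine ⟨by rwa [List.toFinset_nonempty_iff], toFinset_subset_of_forall hS,
    Or.inl ⟨l.length, indPathList_iso hl⟩, ?_⟩
  intro v hv
  obtain ⟨i, hi, rfl⟩ := List.mem_iff_getElem.1 (List.mem_toFinset.1 hv)
  rcases Nat.eq_zero_or_pos i with rfl | hipos
  · exact h0
  rcases Nat.lt_or_ge i (l.length - 1) with hilt | hige
  · refine out_card_le_one H hdeg (toFinset_subset_of_forall hS) ?_
      ((path_adj_iff hl (i := i) (j := i - 1) hi (by omega)).2 (Or.inr (by omega)))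
      ((path_adj_iff hl (i := i) (j := i + 1) hi (by omega)).2 (Or.inl (by omega)))
      (List.mem_toFinset.2 (List.getElem_mem _)) (List.mem_toFinset.2 (List.getElem_mem _))
    intro he
    have := (List.Nodup.getElem_inj_iff hl.1).1 he
    omega
  · have : i = l.length - 1 := by omega
    subst this
    exact h1

lemma cycle_peel (hdeg : ∀ v, (H.neighborSet v).ncard ≤ 3) {S : Finset ι} {c : List ι}
    (hc : IsIndCycleList H c) (h5 : 5 ≤ c.length) (hS : ∀ x ∈ c, x ∈ S) :
    Peel H S c.toFinset := by
  have hne0 : c ≠ [] := List.ne_nil_of_length_pos (by omega)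
  refine ⟨by rwa [List.toFinset_nonempty_iff],
    toFinset_subset_of_forall hS,
    Or.inr ⟨c.length, h5, indCycleList_iso hc h5⟩, ?_⟩
  intro v hv
  obtain ⟨i, hi, rfl⟩ := List.mem_iff_getElem.1 (List.mem_toFinset.1 hv)
  have hnd := hc.1
  have hadj := fun {i' j'} (hi' : i' < c.length) (hj' : j' < c.length) =>
    cycle_adj_iff hc (by omega) hi' hj'
  -- choose the two cycle-neighbours of c[i]
  rcases Nat.eq_zero_or_pos i with rfl | hipos
  · refine out_card_le_one H hdeg (toFinset_subset_of_forall hS) ?_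
      ((hadj (i' := 0) (j' := 1) (by omega) (by omega)).2 (by omega))
      ((hadj (i' := 0) (j' := c.length - 1) (by omega) (by omega)).2 (by omega))
      (List.mem_toFinset.2 (List.getElem_mem _)) (List.mem_toFinset.2 (List.getElem_mem _))
    intro he
    have := (List.Nodup.getElem_inj_iff hnd).1 he
    omega
  rcases Nat.lt_or_ge i (c.length - 1) with hilt | hige
  · refine out_card_le_one H hdeg (toFinset_subset_of_forall hS) ?_
      ((hadj (i' := i) (j' := i - 1) hi (by omega)).2 (by omega))
      ((hadj (i' := i) (j' := i + 1) hi (by omega)).2 (by omega))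
      (List.mem_toFinset.2 (List.getElem_mem _)) (List.mem_toFinset.2 (List.getElem_mem _))
    intro he
    have := (List.Nodup.getElem_inj_iff hnd).1 he
    omega
  · have hieq : i = c.length - 1 := by omega
    subst hieq
    refine out_card_le_one H hdeg (toFinset_subset_of_forall hS) ?_
      ((hadj (i' := c.length - 1) (j' := c.length - 2) hi (by omega)).2 (by omega))
      ((hadj (i' := c.length - 1) (j' := 0) hi (by omega)).2 (by omega))
      (List.mem_toFinset.2 (List.getElem_mem _)) (List.mem_toFinset.2 (List.getElem_mem _))
    intro he
    have := (List.Nodup.getElem_inj_iff hnd).1 he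
    omega

end peelhelpers


section endanalysis
variable (H : SimpleGraph ι) [DecidableRel H.Adj]

lemma end_analysis (hdeg : ∀ v, (H.neighborSet v).ncard ≤ 3) (htf : H.CliqueFree 3)
    {S : Finset ι} {l : List ι} (hg : Good H S l)
    (hmax : ∀ l', Good H S l' → l'.length ≤ l.length) (h4 : 4 ≤ l.length) :
    (∃ P, Peel H S P) ∨
      ((S \ l.toFinset).filter (H.Adj (l[0]'(by omega)))).card ≤ 1 := by
  classical
  obtain ⟨hpl, hmemS, hlne⟩ := hg
  have key : ∀ y ∈ (S \ l.toFinset).filter (H.Adj (l[0]'(by omega))),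
      (∃ P, Peel H S P) ∨ H.Adj y (l[2]'(by omega)) := by
    intro y hy
    rw [mem_filter, mem_sdiff] at hy
    obtain ⟨⟨hyS, hyl⟩, hadj0⟩ := hy
    have hynl : y ∉ l := fun h => hyl (List.mem_toFinset.2 h)
    have hatt : ∃ m, ∃ h : m < l.length, 0 < m ∧ H.Adj y (l[m]'h) := by
      by_contra hno
      push_neg at hno
      have hg2 := good_cons H ⟨hpl, hmemS, hlne⟩ hyS hynl (by omega) hadj0.symm
        (fun m hm hpos => hno m hm hpos)
      have := hmax _ hg2
      simp only [List.length_cons] at this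
      omega
    obtain ⟨m₀, hQ0, hminQ⟩ : ∃ m, (∃ h : m < l.length, 0 < m ∧ H.Adj y (l[m]'h)) ∧
        ∀ m' < m, ¬(∃ h : m' < l.length, 0 < m' ∧ H.Adj y (l[m']'h)) :=
      ⟨Nat.find hatt, Nat.find_spec hatt, fun m hm => Nat.find_min hatt hm⟩
    obtain ⟨hm₀n, hm₀pos, hm₀adj⟩ := hQ0
    have hne1 : m₀ ≠ 1 := by
      intro h1
      subst h1
      exact no_triangle H htf ((hpl.2 0 1 (by omega) (by omega)).2 rfl) hadj0 hm₀adj.symm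
    rcases Nat.lt_or_ge m₀ 3 with hlt | hge
    · right
      have : m₀ = 2 := by omega
      subst this
      exact hm₀adj
    · left
      have hcl := cycle_of_attach H hpl hynl hm₀n hadj0.symm hm₀adj
        (fun m h1 h2 => by
          intro hadjc
          exact hminQ m (by omega) ⟨by omega, h1, hadjc⟩) (by omega)
      have hclen : (y :: l.take (m₀ + 1)).length = m₀ + 2 := by
        simp only [List.length_cons, List.length_take]
        omega
      refine ⟨_, cycle_peel H hdeg hcl (by omega) ?_⟩
      intro x hx
      rcases List.mem_cons.1 hx with rfl | hx'
      · exact hyS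
      · exact hmemS x (List.mem_of_mem_take hx')
  by_cases hP : ∃ P, Peel H S P
  · exact Or.inl hP
  · right
    have h2 : ∀ y ∈ (S \ l.toFinset).filter (H.Adj (l[0]'(by omega))),
        H.Adj y (l[2]'(by omega)) := fun y hy => (key y hy).resolve_left hP
    set E := (S \ l.toFinset).filter (H.Adj (l[0]'(by omega))) with hE
    have hsub : insert (l[1]'(by omega)) (insert (l[3]'(by omega)) E)
        ⊆ S.filter (H.Adj (l[2]'(by omega))) := by
      intro w hw
      rcases mem_insert.1 hw with rfl | hw
      · exact mem_filter.2 ⟨hmemS _ (List.getElem_mem _),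
          (path_adj_iff hpl (i := 2) (j := 1) (by omega) (by omega)).2 (Or.inr rfl)⟩
      rcases mem_insert.1 hw with rfl | hw
      · exact mem_filter.2 ⟨hmemS _ (List.getElem_mem _),
          (path_adj_iff hpl (i := 2) (j := 3) (by omega) (by omega)).2 (Or.inl rfl)⟩
      · have := h2 w hw
        rw [hE, mem_filter, mem_sdiff] at hw
        exact mem_filter.2 ⟨hw.1.1, this.symm⟩
    have hEl : ∀ i : ℕ, ∀ h : i < l.length, (l[i]'h) ∉ E := by
      intro i h hmem
      rw [hE, mem_filter, mem_sdiff] at hmem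
      exact hmem.1.2 (List.mem_toFinset.2 (List.getElem_mem _))
    have h13 : (l[1]'(by omega)) ≠ (l[3]'(by omega)) := by
      intro he
      have := (List.Nodup.getElem_inj_iff hpl.1).1 he
      omega
    have hcard := card_le_card hsub
    rw [card_insert_of_notMem (by
        intro hmem
        rcases mem_insert.1 hmem with he | hmem
        · exact h13 he
        · exact hEl 1 (by omega) hmem),
      card_insert_of_notMem (hEl 3 (by omega))] at hcard
    have h3 := deg_bound H hdeg S (l[2]'(by omega))
    omega

end endanalysis


section peelmain
variable (H : SimpleGraph ι) [DecidableRel H.Adj]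

lemma getElem_congr' {l : List ι} {i j : ℕ} (h : i = j) (hj : j < l.length) :
    l[i]'(by omega) = l[j]'hj := by subst h; rfl

lemma nbr_closed (hdeg : ∀ v, (H.neighborSet v).ncard ≤ 3) {S : Finset ι} {v : ι}
    {s : Finset ι} (h : S.filter (H.Adj v) = s) (hs : 3 ≤ s.card) :
    ∀ u, H.Adj v u → u ∈ s := by
  intro u hu
  have hsub : (s : Set ι) ⊆ H.neighborSet v := by
    rw [← h]
    intro w hw
    simp only [coe_filter, Set.mem_setOf_eq] at hw
    exact hw.2
  have heq : (s : Set ι) = H.neighborSet v :=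
    Set.eq_of_subset_of_ncard_le hsub (by rw [Set.ncard_coe_finset]; exact (hdeg v).trans hs)
      (Set.toFinite _)
  have : u ∈ (s : Set ι) := heq ▸ hu
  exact_mod_cast this

lemma claim3 (htf : H.CliqueFree 3) {S : Finset ι} {l : List ι} (hg : Good H S l)
    (hmax : ∀ l', Good H S l' → l'.length ≤ l.length) (h3 : l.length = 3) :
    ∀ y ∈ S, y ∉ l → H.Adj (l[0]'(by omega)) y → H.Adj y (l[2]'(by omega)) := by
  intro y hyS hyl hadj0
  by_contra hno
  have hno1 : ¬H.Adj y (l[1]'(by omega)) := fun h =>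
    no_triangle H htf ((hg.1.2 0 1 (by omega) (by omega)).2 rfl) hadj0 h.symm
  have hg2 := good_cons H hg hyS hyl (by omega) hadj0.symm (fun m hm hpos => by
    have hm3 : m < 3 := by omega
    interval_cases m
    · exact hno1
    · exact hno)
  have := hmax _ hg2
  simp only [List.length_cons] at this
  omega

lemma peel_exists (hdeg : ∀ v, (H.neighborSet v).ncard ≤ 3) (htf : H.CliqueFree 3)
    (hconn : H.Connected) (hcard : 7 ≤ Fintype.card ι)
    (S : Finset ι) (hS : S.Nonempty) : ∃ P, Peel H S P := by
  classical
  by_cases hA : ∃ v ∈ S, (S.filter (H.Adj v)).card ≤ 1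
  · obtain ⟨v, hvS, hv1⟩ := hA
    refine ⟨{v}, ⟨v, mem_singleton_self v⟩, by simpa using hvS, Or.inl ⟨1, ?_⟩, ?_⟩
    · have h1 := indPathList_iso (H := H) (l := [v])
        ⟨by simp, by intro i j hij hj; simp at hj; omega⟩
      convert h1 using 4
      all_goals simp
    · intro w hw
      rw [mem_singleton] at hw
      subst hw
      refine le_trans (card_le_card ?_) hv1
      intro u hu
      rw [mem_filter] at hu ⊢
      exact ⟨(mem_sdiff.1 hu.1).1, hu.2⟩
  · push_neg at hA
    obtain ⟨l, hg, hmax⟩ := exists_maximal H S hS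
    obtain ⟨hpl, hmemS, hlne⟩ := hg
    have hlen1 : 1 ≤ l.length := by
      cases l with
      | nil => exact absurd rfl hlne
      | cons a t => simp
    have hmem' : ∀ i : ℕ, ∀ h : i < l.length, (l[i]'h) ∈ S :=
      fun i h => hmemS _ (List.getElem_mem _)
    -- length at least 3
    have hlen3 : 3 ≤ l.length := by
      rcases Nat.lt_or_ge l.length 3 with hc | hc
      · exfalso
        have hc12 : l.length = 1 ∨ l.length = 2 := by omega
        rcases hc12 with hl1 | hl2
        · -- length 1
          have h2 := hA (l[0]'(by omega)) (hmem' 0 (by omega))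
          obtain ⟨y, hy⟩ : (S.filter (H.Adj (l[0]'(by omega)))).Nonempty := by
            rw [← card_pos]; omega
          rw [mem_filter] at hy
          have hynl : y ∉ l := by
            intro hmem
            obtain ⟨i, hi, rfl⟩ := List.mem_iff_getElem.1 hmem
            have : i = 0 := by omega
            subst this
            exact H.irrefl hy.2
          have hg2 := good_cons H ⟨hpl, hmemS, hlne⟩ hy.1 hynl (by omega) hy.2.symm
            (fun m hm hpos => absurd hm (by omega))
          have := hmax _ hg2
          simp only [List.length_cons] at this
          omega
        · -- length 2
          have h2 := hA (l[0]'(by omega)) (hmem' 0 (by omega))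
          obtain ⟨y, hyf, hyne⟩ : ∃ y ∈ S.filter (H.Adj (l[0]'(by omega))), y ≠ l[1]'(by omega) := by
            by_contra hall
            push_neg at hall
            have hsub : S.filter (H.Adj (l[0]'(by omega))) ⊆ {l[1]'(by omega)} := by
              intro u hu
              rw [mem_singleton]
              exact hall u hu
            have := card_le_card hsub
            simp at this
            omega
          rw [mem_filter] at hyf
          have hynl : y ∉ l := by
            intro hmem
            obtain ⟨i, hi, rfl⟩ := List.mem_iff_getElem.1 hmem
            have hi2 : i < 2 := by omega
            interval_cases i
            · exact H.irrefl hyf.2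
            · exact hyne rfl
          have hny1 : ¬H.Adj y (l[1]'(by omega)) := fun h =>
            no_triangle H htf ((hpl.2 0 1 (by omega) (by omega)).2 rfl) hyf.2 h.symm
          have hg2 := good_cons H ⟨hpl, hmemS, hlne⟩ hyf.1 hynl (by omega) hyf.2.symm
            (fun m hm hpos => by
              have : m = 1 := by omega
              subst this
              exact hny1)
          have := hmax _ hg2
          simp only [List.length_cons] at this
          omega
      · exact hc
    by_cases hn3 : l.length = 3
    · -- length exactly 3
      obtain ⟨x0, x1, x2, rfl⟩ : ∃ a b c, l = [a, b, c] := by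
        cases l with
        | nil => exact absurd hn3 (by simp)
        | cons a t =>
          cases t with
          | nil => exact absurd hn3 (by simp)
          | cons b t2 =>
            cases t2 with
            | nil => exact absurd hn3 (by simp)
            | cons c t3 =>
              cases t3 with
              | nil => exact ⟨a, b, c, rfl⟩
              | cons d t4 =>
                exfalso
                simp only [List.length_cons] at hn3
                omega
      have hx01 : H.Adj x0 x1 := (hpl.2 0 1 (by omega) (by simp)).2 rfl
      have hx12 : H.Adj x1 x2 := (hpl.2 1 2 (by omega) (by simp)).2 rfl
      have hx02 : ¬H.Adj x0 x2 := fun h => by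
        have := (hpl.2 0 2 (by omega) (by simp)).1 h
        omega
      have h02 : x0 ≠ x2 := by
        have := hpl.1
        simp only [List.nodup_cons, List.mem_cons, List.mem_singleton] at this
        tauto
      have hx0S : x0 ∈ S := hmemS x0 (by simp)
      have hx1S : x1 ∈ S := hmemS x1 (by simp)
      have hx2S : x2 ∈ S := hmemS x2 (by simp)
      have hc3 : ∀ y ∈ S, y ∉ ([x0, x1, x2] : List ι) → H.Adj x0 y → H.Adj y x2 :=
        claim3 H htf ⟨hpl, hmemS, hlne⟩ hmax hn3
      have hrev : ([x0, x1, x2] : List ι).reverse = [x2, x1, x0] := by simp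
      have hgrev : Good H S [x2, x1, x0] := by
        have := good_reverse H ⟨hpl, hmemS, hlne⟩
        rwa [hrev] at this
      have hmaxrev : ∀ l', Good H S l' → l'.length ≤ ([x2, x1, x0] : List ι).length :=
        fun l' h => by simpa using hmax l' h
      have hc3' : ∀ y ∈ S, y ∉ ([x2, x1, x0] : List ι) → H.Adj x2 y → H.Adj y x0 :=
        claim3 H htf hgrev hmaxrev (by simp)
      by_cases hE1 : ((S \ ([x0, x1, x2] : List ι).toFinset).filter (H.Adj x0)).card ≤ 1
      · -- peel the whole path
        have hE02 : (S \ ([x0, x1, x2] : List ι).toFinset).filter (H.Adj x2)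
            = (S \ ([x0, x1, x2] : List ι).toFinset).filter (H.Adj x0) := by
          ext w
          simp only [mem_filter, mem_sdiff, List.mem_toFinset]
          constructor
          · rintro ⟨⟨hwS, hwP⟩, hwadj⟩
            refine ⟨⟨hwS, hwP⟩, ?_⟩
            have := hc3' w hwS (fun hm => hwP (by simp at hm ⊢; tauto)) hwadj
            exact this.symm
          · rintro ⟨⟨hwS, hwP⟩, hwadj⟩
            refine ⟨⟨hwS, hwP⟩, ?_⟩
            have := hc3 w hwS (fun hm => hwP (by simp at hm ⊢; tauto)) hwadj
            exact this.symm
        refine ⟨_, path_peel H hdeg hpl (by simp) hmemS hE1 ?_⟩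
        show ((S \ ([x0, x1, x2] : List ι).toFinset).filter (H.Adj x2)).card ≤ 1
        rw [hE02]
        exact hE1
      · -- at least two extra neighbours of x0
        push_neg at hE1
        obtain ⟨y, hyE, z, hzE, hyz⟩ := one_lt_card.1 hE1
        rw [mem_filter, mem_sdiff, List.mem_toFinset] at hyE hzE
        obtain ⟨⟨hyS, hynl⟩, hadjy⟩ := hyE
        obtain ⟨⟨hzS, hznl⟩, hadjz⟩ := hzE
        have hy2 : H.Adj y x2 := hc3 y hyS hynl hadjy
        have hz2 : H.Adj z x2 := hc3 z hzS hznl hadjz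
        have hyx1 : ¬H.Adj y x1 := fun h => no_triangle H htf hx01 hadjy h.symm
        have hzx1 : ¬H.Adj z x1 := fun h => no_triangle H htf hx01 hadjz h.symm
        have hyzn : ¬H.Adj y z := fun h => no_triangle H htf hadjy hadjz h
        have hyne : y ≠ x0 ∧ y ≠ x1 ∧ y ≠ x2 := by
          constructor
          · intro h; exact hynl (by simp [h])
          constructor
          · intro h; exact hynl (by simp [h])
          · intro h; exact hynl (by simp [h])
        have hzne : z ≠ x0 ∧ z ≠ x1 ∧ z ≠ x2 := by
          constructor
          · intro h; exact hznl (by simp [h])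
          constructor
          · intro h; exact hznl (by simp [h])
          · intro h; exact hznl (by simp [h])
        have hcard3 : ({x1, y, z} : Finset ι).card = 3 := by
          rw [card_insert_of_notMem (by simp [Ne.symm hyne.2.1, Ne.symm hzne.2.1]),
            card_insert_of_notMem (by simp [hyz]), card_singleton]
        have hNx0 : S.filter (H.Adj x0) = {x1, y, z} := by
          refine (eq_of_subset_of_card_le ?_ ?_).symm
          · intro w hw
            simp only [mem_insert, mem_singleton] at hw
            rcases hw with rfl | rfl | rfl
            · exact mem_filter.2 ⟨hx1S, hx01⟩
            · exact mem_filter.2 ⟨hyS, hadjy⟩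
            · exact mem_filter.2 ⟨hzS, hadjz⟩
          · rw [hcard3]
            exact deg_bound H hdeg S x0
        have hNx2 : S.filter (H.Adj x2) = {x1, y, z} := by
          refine (eq_of_subset_of_card_le ?_ ?_).symm
          · intro w hw
            simp only [mem_insert, mem_singleton] at hw
            rcases hw with rfl | rfl | rfl
            · exact mem_filter.2 ⟨hx1S, hx12.symm⟩
            · exact mem_filter.2 ⟨hyS, hy2.symm⟩
            · exact mem_filter.2 ⟨hzS, hz2.symm⟩
          · rw [hcard3]
            exact deg_bound H hdeg S x2
        by_cases hw : ∃ w ∈ S, H.Adj x1 w ∧ w ≠ x0 ∧ w ≠ x2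
        · -- K33: contradiction with connectivity and |V| ≥ 7
          exfalso
          obtain ⟨w, hwS, hadjw, hwx0, hwx2⟩ := hw
          have hwx1 : w ≠ x1 := fun h => H.irrefl (h ▸ hadjw)
          have hwy : w ≠ y := fun h => hyx1 (by rw [h] at hadjw; exact hadjw.symm)
          have hwz : w ≠ z := fun h => hzx1 (by rw [h] at hadjw; exact hadjw.symm)
          have hnwx0 : ¬H.Adj x0 w := fun h => by
            have : w ∈ S.filter (H.Adj x0) := mem_filter.2 ⟨hwS, h⟩
            rw [hNx0] at this
            simp only [mem_insert, mem_singleton] at this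
            tauto
          have hnwx2 : ¬H.Adj x2 w := fun h => by
            have : w ∈ S.filter (H.Adj x2) := mem_filter.2 ⟨hwS, h⟩
            rw [hNx2] at this
            simp only [mem_insert, mem_singleton] at this
            tauto
          have hadjwy : H.Adj w y := by
            by_contra hnc
            have hq := isIndPathList_quad H hadjw.symm hx01.symm hadjy
              (fun h => hnwx0 h.symm) hnc (fun h => hyx1 h.symm)
              hwx0 hwy (Ne.symm hyne.2.1)
            have := hmax [w, x1, x0, y] ⟨hq, by
              intro x hx
              simp only [List.mem_cons, List.mem_singleton, List.not_mem_nil, or_false] at hx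
              rcases hx with rfl | rfl | rfl | rfl <;> assumption, by simp⟩
            simp only [List.length_cons] at this
            omega
          have hadjwz : H.Adj w z := by
            by_contra hnc
            have hq := isIndPathList_quad H hadjw.symm hx01.symm hadjz
              (fun h => hnwx0 h.symm) hnc (fun h => hzx1 h.symm)
              hwx0 hwz (Ne.symm hzne.2.1)
            have := hmax [w, x1, x0, z] ⟨hq, by
              intro x hx
              simp only [List.mem_cons, List.mem_singleton, List.not_mem_nil, or_false] at hx
              rcases hx with rfl | rfl | rfl | rfl <;> assumption, by simp⟩
            simp only [List.length_cons] at this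
            omega
          -- neighbourhoods of all six vertices are inside T
          have hcx0 := nbr_closed H hdeg hNx0 (by omega)
          have hcx2 := nbr_closed H hdeg hNx2 (by omega)
          have hcard3' : ({x0, x2, w} : Finset ι).card = 3 := by
            rw [card_insert_of_notMem (by simp [h02, Ne.symm hwx0]),
              card_insert_of_notMem (by simp [Ne.symm hwx2]), card_singleton]
          have hNx1 : S.filter (H.Adj x1) = {x0, x2, w} := by
            refine (eq_of_subset_of_card_le ?_ ?_).symm
            · intro u hu
              simp only [mem_insert, mem_singleton] at hu
              rcases hu with rfl | rfl | rfl
              · exact mem_filter.2 ⟨hx0S, hx01.symm⟩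
              · exact mem_filter.2 ⟨hx2S, hx12⟩
              · exact mem_filter.2 ⟨hwS, hadjw⟩
            · rw [hcard3']
              exact deg_bound H hdeg S x1
          have hNy : S.filter (H.Adj y) = {x0, x2, w} := by
            refine (eq_of_subset_of_card_le ?_ ?_).symm
            · intro u hu
              simp only [mem_insert, mem_singleton] at hu
              rcases hu with rfl | rfl | rfl
              · exact mem_filter.2 ⟨hx0S, hadjy.symm⟩
              · exact mem_filter.2 ⟨hx2S, hy2⟩
              · exact mem_filter.2 ⟨hwS, hadjwy.symm⟩
            · rw [hcard3']
              exact deg_bound H hdeg S y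
          have hNz : S.filter (H.Adj z) = {x0, x2, w} := by
            refine (eq_of_subset_of_card_le ?_ ?_).symm
            · intro u hu
              simp only [mem_insert, mem_singleton] at hu
              rcases hu with rfl | rfl | rfl
              · exact mem_filter.2 ⟨hx0S, hadjz.symm⟩
              · exact mem_filter.2 ⟨hx2S, hz2⟩
              · exact mem_filter.2 ⟨hwS, hadjwz.symm⟩
            · rw [hcard3']
              exact deg_bound H hdeg S z
          have hNw : S.filter (H.Adj w) = {x1, y, z} := by
            refine (eq_of_subset_of_card_le ?_ ?_).symm
            · intro u hu
              simp only [mem_insert, mem_singleton] at hu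
              rcases hu with rfl | rfl | rfl
              · exact mem_filter.2 ⟨hx1S, hadjw.symm⟩
              · exact mem_filter.2 ⟨hyS, hadjwy⟩
              · exact mem_filter.2 ⟨hzS, hadjwz⟩
            · rw [hcard3]
              exact deg_bound H hdeg S w
          have hcx1 := nbr_closed H hdeg hNx1 (by omega)
          have hcy := nbr_closed H hdeg hNy (by omega)
          have hcz := nbr_closed H hdeg hNz (by omega)
          have hcw := nbr_closed H hdeg hNw (by omega)
          set T : Finset ι := {x0, x1, x2, y, z, w} with hT
          have hclosed : ∀ u ∈ T, ∀ v', H.Adj u v' → v' ∈ T := by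
            intro u hu v' hadj
            rw [hT] at hu ⊢
            simp only [mem_insert, mem_singleton] at hu ⊢
            rcases hu with rfl | rfl | rfl | rfl | rfl | rfl
            · have := hcx0 v' hadj
              simp only [mem_insert, mem_singleton] at this
              tauto
            · have := hcx1 v' hadj
              simp only [mem_insert, mem_singleton] at this
              tauto
            · have := hcx2 v' hadj
              simp only [mem_insert, mem_singleton] at this
              tauto
            · have := hcy v' hadj
              simp only [mem_insert, mem_singleton] at this
              tauto
            · have := hcz v' hadj
              simp only [mem_insert, mem_singleton] at this
              tauto
            · have := hcw v' hadj
              simp only [mem_insert, mem_singleton] at this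
              tauto
          have hkey : ∀ a b : ι, ∀ p : H.Walk a b, a ∈ T → b ∈ T := by
            intro a b p
            induction p with
            | nil => exact fun h => h
            | cons h q ih => exact fun ha => ih (hclosed _ ha _ h)
          have hall : ∀ u : ι, u ∈ T := by
            intro u
            have hx0T : x0 ∈ T := by rw [hT]; simp
            exact (hconn x0 u).elim (fun p => hkey _ _ p hx0T)
          have hsubT : (univ : Finset ι) ⊆ T := fun u _ => hall u
          have c1 : ({w} : Finset ι).card ≤ 1 := by simp
          have c2 : ({z, w} : Finset ι).card ≤ 2 := le_trans (card_insert_le _ _) (by omega)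
          have c3 : ({y, z, w} : Finset ι).card ≤ 3 := le_trans (card_insert_le _ _) (by omega)
          have c4 : ({x2, y, z, w} : Finset ι).card ≤ 4 := le_trans (card_insert_le _ _) (by omega)
          have c5 : ({x1, x2, y, z, w} : Finset ι).card ≤ 5 := le_trans (card_insert_le _ _) (by omega)
          have c6 : T.card ≤ 6 := le_trans (card_insert_le _ _) (by omega)
          have := card_le_card hsubT
          rw [card_univ] at this
          omega
        · -- x1 has no further neighbours; so peel [x1, x0, y]
          push_neg at hw
          have hw' : ∀ u ∈ S, H.Adj x1 u → u = x0 ∨ u = x2 := fun u hu ha => by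
            by_cases h' : u = x0
            · exact Or.inl h'
            · exact Or.inr (hw u hu ha h')
          have hwy : ∀ u ∈ S, H.Adj y u → u = x0 ∨ u = x2 := by
            intro u huS hadj
            by_contra hnc
            push_neg at hnc
            obtain ⟨hux0, hux2⟩ := hnc
            have hux1 : u ≠ x1 := by
              rintro rfl
              exact hyx1 hadj
            have huz : u ≠ z := by
              rintro rfl
              exact hyzn hadj
            have hnux0 : ¬H.Adj u x0 := fun h => by
              have : u ∈ S.filter (H.Adj x0) := mem_filter.2 ⟨huS, h.symm⟩
              rw [hNx0] at this
              simp only [mem_insert, mem_singleton] at this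
              have huy : u ≠ y := fun h' => H.irrefl (h' ▸ hadj)
              tauto
            have hnux1 : ¬H.Adj u x1 := fun h => by
              rcases hw' u huS h.symm with h' | h' <;> tauto
            have hq := isIndPathList_quad H hadj.symm hadjy.symm hx01
              hnux0 hnux1 hyx1 hux0 hux1 hyne.2.1
            have := hmax [u, y, x0, x1] ⟨hq, by
              intro x hx
              simp only [List.mem_cons, List.mem_singleton, List.not_mem_nil, or_false] at hx
              rcases hx with rfl | rfl | rfl | rfl <;> assumption, by simp⟩
            simp only [List.length_cons] at this
            omega
          -- peel the path [x1, x0, y]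
          have htr : IsIndPathList H [x1, x0, y] :=
            isIndPathList_triple H hx01.symm hadjy (fun h => hyx1 h.symm) (Ne.symm hyne.2.1)
          refine ⟨_, path_peel H hdeg htr (by simp) ?_ ?_ ?_⟩
          · intro x hx
            simp only [List.mem_cons, List.mem_singleton, List.not_mem_nil, or_false] at hx
            rcases hx with rfl | rfl | rfl <;> assumption
          · -- endpoint x1
            show ((S \ ([x1, x0, y] : List ι).toFinset).filter (H.Adj x1)).card ≤ 1
            refine le_trans (card_le_card (fun u hu => ?_)) (card_singleton x2).le
            rw [mem_filter, mem_sdiff, List.mem_toFinset] at hu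
            obtain ⟨⟨huS, huP⟩, hadj⟩ := hu
            rw [mem_singleton]
            rcases hw' u huS hadj with rfl | rfl
            · exact absurd (by simp) huP
            · rfl
          · -- endpoint y
            show ((S \ ([x1, x0, y] : List ι).toFinset).filter (H.Adj y)).card ≤ 1
            refine le_trans (card_le_card (fun u hu => ?_)) (card_singleton x2).le
            rw [mem_filter, mem_sdiff, List.mem_toFinset] at hu
            obtain ⟨⟨huS, huP⟩, hadj⟩ := hu
            rw [mem_singleton]
            rcases hwy u huS hadj with rfl | rfl
            · exact absurd (by simp) huP
            · rfl
    · -- length at least 4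
      have h4 : 4 ≤ l.length := by omega
      rcases end_analysis H hdeg htf ⟨hpl, hmemS, hlne⟩ hmax h4 with ⟨P, hP⟩ | h0
      · exact ⟨P, hP⟩
      rcases end_analysis H hdeg htf (good_reverse H ⟨hpl, hmemS, hlne⟩)
          (fun l' hl' => by simpa using hmax l' hl') (by simpa using h4) with ⟨P, hP⟩ | h1
      · exact ⟨P, hP⟩
      have hrev0 : l.reverse[0]'(by simp; omega) = l[l.length - 1]'(by omega) := by
        rw [List.getElem_reverse]
        exact getElem_congr' (by omega) (by omega)
      have h1' : ((S \ l.toFinset).filter (H.Adj (l[l.length - 1]'(by omega)))).card ≤ 1 := by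
        rw [List.toFinset_reverse, hrev0] at h1
        exact h1
      exact ⟨_, path_peel H hdeg hpl (by omega) hmemS h0 h1'⟩


end peelmain


section main
variable (H : SimpleGraph ι) [DecidableRel H.Adj]

lemma main_induction (hdeg : ∀ v, (H.neighborSet v).ncard ≤ 3) (htf : H.CliqueFree 3)
    (hconn : H.Connected) (hcard : 7 ≤ Fintype.card ι) :
    ∀ n : ℕ, ∀ S : Finset ι, S.card ≤ n →
    ∃ (t : ℕ) (B : Fin t → Finset ι),
      (∀ i, B i ⊆ S) ∧
      (∀ v ∈ S, ∃! i, v ∈ B i) ∧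
      (∀ i, (∃ m, Nonempty (H.induce (B i : Set ι) ≃g SimpleGraph.pathGraph m)) ∨
            (∃ m, 5 ≤ m ∧ Nonempty (H.induce (B i : Set ι) ≃g SimpleGraph.cycleGraph m))) ∧
      (∀ i, ∀ v ∈ B i, Set.ncard {w : ι | H.Adj v w ∧ ∃ j, j < i ∧ w ∈ B j} ≤ 1) := by
  intro n
  induction n with
  | zero =>
    intro S hs
    have hSe : S = ∅ := card_eq_zero.1 (Nat.le_zero.1 hs)
    subst hSe
    exact ⟨0, Fin.elim0, fun i => i.elim0, fun v hv => absurd hv (notMem_empty v),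
      fun i => i.elim0, fun i => i.elim0⟩
  | succ n ih =>
    intro S hS
    rcases S.eq_empty_or_nonempty with rfl | hne
    · exact ⟨0, Fin.elim0, fun i => i.elim0, fun v hv => absurd hv (notMem_empty v),
        fun i => i.elim0, fun i => i.elim0⟩
    obtain ⟨P, hPne, hPS, hshape, hout⟩ := peel_exists H hdeg htf hconn hcard S hne
    obtain ⟨t, B, hBsub, hBpart, hBshape, hBcount⟩ := ih (S \ P) (by
      have h1 : (S \ P).card = S.card - P.card := card_sdiff_of_subset hPS
      have h2 : 1 ≤ P.card := card_pos.2 hPne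
      omega)
    set SN : Fin (t + 1) → Finset ι := Fin.snoc B P with hSN
    have hlast : SN (Fin.last t) = P := by simp [hSN]
    have hcast : ∀ i0 : Fin t, SN (Fin.castSucc i0) = B i0 := fun i0 => by simp [hSN]
    refine ⟨t + 1, SN, ?_, ?_, ?_, ?_⟩
    · intro i
      refine Fin.lastCases ?_ ?_ i
      · rw [hlast]; exact hPS
      · intro i0
        rw [hcast]
        exact (hBsub i0).trans sdiff_subset
    · intro v hv
      by_cases hvP : v ∈ P
      · refine ⟨Fin.last t, by show v ∈ SN (Fin.last t); rw [hlast]; exact hvP, ?_⟩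
        intro j hj
        refine Fin.lastCases (motive := fun j => v ∈ SN j → j = Fin.last t)
          (fun _ => rfl) ?_ j hj
        intro j0 hj0
        rw [hcast] at hj0
        exact absurd hvP (mem_sdiff.1 (hBsub j0 hj0)).2
      · obtain ⟨i0, hi0, huniq⟩ := hBpart v (mem_sdiff.2 ⟨hv, hvP⟩)
        refine ⟨Fin.castSucc i0, by show v ∈ SN (Fin.castSucc i0); rw [hcast]; exact hi0, ?_⟩
        intro j hj
        refine Fin.lastCases (motive := fun j => v ∈ SN j → j = Fin.castSucc i0)
          ?_ ?_ j hj
        · intro hj0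
          rw [hlast] at hj0
          exact absurd hj0 hvP
        · intro j0 hj0
          rw [hcast] at hj0
          exact congrArg Fin.castSucc (huniq j0 hj0)
    · intro i
      refine Fin.lastCases ?_ ?_ i
      · rw [hlast]; exact hshape
      · intro i0
        rw [hcast]; exact hBshape i0
    · intro i
      refine Fin.lastCases ?_ ?_ i
      · intro v hv
        rw [hlast] at hv
        have hsub : {w : ι | H.Adj v w ∧ ∃ j, j < Fin.last t ∧ w ∈ SN j}
            ⊆ (((S \ P).filter (H.Adj v) : Finset ι) : Set ι) := by
          rintro w ⟨hadj, j, hjlt, hjmem⟩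
          have hjt : j.1 < t := by
            rw [Fin.lt_def] at hjlt
            simpa using hjlt
          have hje : j = Fin.castSucc ⟨j.1, hjt⟩ := Fin.ext rfl
          rw [hje, hcast] at hjmem
          simp only [coe_filter, Set.mem_setOf_eq, mem_coe]
          exact ⟨hBsub _ hjmem, hadj⟩
        calc Set.ncard {w : ι | H.Adj v w ∧ ∃ j, j < Fin.last t ∧ w ∈ SN j}
            ≤ (((S \ P).filter (H.Adj v) : Finset ι) : Set ι).ncard :=
              Set.ncard_le_ncard hsub (Set.toFinite _)
          _ = ((S \ P).filter (H.Adj v)).card := Set.ncard_coe_finset _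
          _ ≤ 1 := hout v hv
      · intro i0 v hv
        rw [hcast] at hv
        have hseteq : {w : ι | H.Adj v w ∧ ∃ j, j < Fin.castSucc i0 ∧ w ∈ SN j}
            = {w : ι | H.Adj v w ∧ ∃ j, j < i0 ∧ w ∈ B j} := by
          ext w
          simp only [Set.mem_setOf_eq]
          constructor
          · rintro ⟨hadj, j, hjlt, hjmem⟩
            have hjt : j.1 < t := by
              rw [Fin.lt_def] at hjlt
              have := i0.2
              simp only [Fin.coe_castSucc] at hjlt
              omega
            have hje : j = Fin.castSucc ⟨j.1, hjt⟩ := Fin.ext rfl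
            rw [hje, hcast] at hjmem
            refine ⟨hadj, ⟨j.1, hjt⟩, ?_, hjmem⟩
            rw [Fin.lt_def]
            rw [Fin.lt_def] at hjlt
            simpa using hjlt
          · rintro ⟨hadj, j, hjlt, hjmem⟩
            refine ⟨hadj, Fin.castSucc j, ?_, by rw [hcast]; exact hjmem⟩
            rw [Fin.lt_def] at hjlt ⊢
            simpa using hjlt
        rw [hseteq]
        exact hBcount i0 v hv

end main
end TFCD

/-- A connected triangle-free graph of maximum degree at most three on at least
seven vertices admits a partition of its vertex set into blocks, each inducing a
path or a cycle of length at least five, such that every vertex of a block has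
at most one neighbour in earlier blocks. -/
theorem triangle_free_cubic_decomposition {ι : Type*} [Fintype ι] (H : SimpleGraph ι)
    (hconn : H.Connected)
    (hdeg : ∀ v, (H.neighborSet v).ncard ≤ 3)
    (htf : H.CliqueFree 3)
    (hcard : 7 ≤ Fintype.card ι) :
    ∃ (t : ℕ) (B : Fin t → Finset ι),
      (∀ v : ι, ∃! i : Fin t, v ∈ B i) ∧
      (∀ i : Fin t,
        (∃ m : ℕ, Nonempty (H.induce (B i : Set ι) ≃g SimpleGraph.pathGraph m)) ∨
        (∃ m : ℕ, 5 ≤ m ∧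
          Nonempty (H.induce (B i : Set ι) ≃g SimpleGraph.cycleGraph m))) ∧
      (∀ i : Fin t, ∀ v ∈ B i,
        Set.ncard {w : ι | H.Adj v w ∧ ∃ j : Fin t, j < i ∧ w ∈ B j} ≤ 1) := by
  classical
  obtain ⟨t, B, hsub, hpart, hshape, hcount⟩ :=
    TFCD.main_induction H hdeg htf hconn hcard (Finset.univ.card) Finset.univ le_rfl
  exact ⟨t, B, fun v => hpart v (Finset.mem_univ v), hshape, hcount⟩
end

section
/- Let H be a connected bipartite graph with maximum degree at most three and at least 7 vertices. Then there exist t ∈ ℕ and a partition V(H) = B₁ ∪ ⋯ ∪ B_t such that: (1) for each i, the subgraph of H induced by B_i is either a path or a cycle of length at least six; and (2) for every i ∈ {2,…,t}, each vertex of B_i has at most one neighbour in B₁ ∪ ⋯ ∪ B_{i−1}. -/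
open scoped Classical
set_option maxHeartbeats 2000000

namespace BCD

variable {ι : Type*} (H : SimpleGraph ι)

/-- Number of neighbours of `v` inside the finset `S`. -/
noncomputable def ndeg (S : Finset ι) (v : ι) : ℕ := (S.filter (fun w => H.Adj v w)).card

/-- `f 0, …, f (m-1)` is an induced path in `H` with all vertices in `S`. -/
def IsIndPath (S : Finset ι) (m : ℕ) (f : ℕ → ι) : Prop :=
  (∀ i < m, f i ∈ S) ∧
  (∀ i < m, ∀ j < m, f i = f j → i = j) ∧
  (∀ i < m, ∀ j < m, (H.Adj (f i) (f j) ↔ (i + 1 = j ∨ j + 1 = i)))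

/-- `f 0, …, f (m-1)` is an induced cycle in `H` with all vertices in `S`. -/
def IsIndCycle (S : Finset ι) (m : ℕ) (f : ℕ → ι) : Prop :=
  (∀ i < m, f i ∈ S) ∧
  (∀ i < m, ∀ j < m, f i = f j → i = j) ∧
  (∀ i < m, ∀ j < m, (H.Adj (f i) (f j) ↔
    (i + 1 = j ∨ j + 1 = i ∨ (i = 0 ∧ j + 1 = m) ∨ (j = 0 ∧ i + 1 = m))))

lemma ndeg_split (C B : Finset ι) (hBC : B ⊆ C) (v : ι) :
    ndeg H C v = ndeg H (C \ B) v + ndeg H B v := by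
  unfold ndeg
  rw [← Finset.card_union_of_disjoint, ← Finset.filter_union]
  · rw [Finset.sdiff_union_of_subset hBC]
  · exact Finset.disjoint_filter_filter (Finset.sdiff_disjoint)

lemma ndeg_le_of_subset {C D : Finset ι} (h : C ⊆ D) (v : ι) :
    ndeg H C v ≤ ndeg H D v :=
  Finset.card_le_card (Finset.filter_subset_filter _ h)

lemma mem_filter_adj {S : Finset ι} {v w : ι} :
    w ∈ S.filter (fun w => H.Adj v w) ↔ w ∈ S ∧ H.Adj v w := Finset.mem_filter

/-- Iso to a path graph from the data of an induced path. -/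
lemma path_iso {S : Finset ι} {m : ℕ} {f : ℕ → ι} (h : IsIndPath H S m f)
    (B : Finset ι) (hB : ∀ x, x ∈ B ↔ ∃ i < m, f i = x) :
    Nonempty (H.induce (B : Set ι) ≃g SimpleGraph.pathGraph m) := by
  obtain ⟨hmem, hinj, hadj⟩ := h
  have hto : ∀ i : Fin m, f i ∈ (B : Set ι) := by
    intro i; simp only [Finset.coe_sort_coe, Finset.mem_coe, hB]
    exact ⟨i, i.isLt, rfl⟩
  have hbij : Function.Bijective (fun i : Fin m => (⟨f i, hto i⟩ : (B : Set ι))) := by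
    constructor
    · intro i j hij
      have := hinj i i.isLt j j.isLt (by simpa using hij)
      exact Fin.ext this
    · rintro ⟨x, hx⟩
      simp only [Finset.mem_coe, hB] at hx
      obtain ⟨i, hi, hfi⟩ := hx
      exact ⟨⟨i, hi⟩, by simpa using hfi⟩
  refine ⟨(SimpleGraph.Iso.symm ⟨Equiv.ofBijective _ hbij, ?_⟩ : _)⟩
  intro a b
  simp only [Equiv.ofBijective_apply, SimpleGraph.comap_adj, Function.Embedding.coe_subtype]
  rw [hadj a a.isLt b b.isLt, SimpleGraph.pathGraph_adj]


lemma fin_sub_val_one {m : ℕ} (hm : 2 ≤ m) (a b : Fin m) :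
    (a - b).val = 1 ↔ (b.val + 1 = a.val ∨ (a.val = 0 ∧ b.val + 1 = m)) := by
  have ha := a.isLt
  have hb := b.isLt
  rw [Fin.sub_def]
  simp only
  rcases lt_or_ge (m - b.val + a.val) m with h | h
  · rw [Nat.mod_eq_of_lt h]; omega
  · rw [Nat.mod_eq_sub_mod h, Nat.mod_eq_of_lt (by omega)]; omega

/-- Iso to a cycle graph from the data of an induced cycle. -/
lemma cycle_iso {S : Finset ι} {m : ℕ} {f : ℕ → ι} (hm : 2 ≤ m) (h : IsIndCycle H S m f)
    (B : Finset ι) (hB : ∀ x, x ∈ B ↔ ∃ i < m, f i = x) :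
    Nonempty (H.induce (B : Set ι) ≃g SimpleGraph.cycleGraph m) := by
  obtain ⟨hmem, hinj, hadj⟩ := h
  have hto : ∀ i : Fin m, f i ∈ (B : Set ι) := by
    intro i; simp only [Finset.coe_sort_coe, Finset.mem_coe, hB]
    exact ⟨i, i.isLt, rfl⟩
  have hbij : Function.Bijective (fun i : Fin m => (⟨f i, hto i⟩ : (B : Set ι))) := by
    constructor
    · intro i j hij
      have := hinj i i.isLt j j.isLt (by simpa using hij)
      exact Fin.ext this
    · rintro ⟨x, hx⟩
      simp only [Finset.mem_coe, hB] at hx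
      obtain ⟨i, hi, hfi⟩ := hx
      exact ⟨⟨i, hi⟩, by simpa using hfi⟩
  refine ⟨(SimpleGraph.Iso.symm ⟨Equiv.ofBijective _ hbij, ?_⟩ : _)⟩
  intro a b
  simp only [Equiv.ofBijective_apply, SimpleGraph.comap_adj, Function.Embedding.coe_subtype]
  rw [hadj a a.isLt b b.isLt, SimpleGraph.cycleGraph_adj',
    fin_sub_val_one hm, fin_sub_val_one hm]
  omega


/-! ### Reachability within a finset -/

def Step (S : Finset ι) (a b : ι) : Prop := H.Adj a b ∧ a ∈ S ∧ b ∈ S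

def Reach (S : Finset ι) : ι → ι → Prop := Relation.ReflTransGen (Step H S)

lemma reach_symm {S : Finset ι} {u v : ι} (h : Reach H S u v) : Reach H S v u := by
  haveI : Std.Symm (Step H S) := ⟨by rintro a b ⟨h1, h2, h3⟩; exact ⟨h1.symm, h3, h2⟩⟩
  exact (Relation.ReflTransGen.stdSymm (r := Step H S)).symm _ _ h

lemma reach_mono {S T : Finset ι} (hST : S ⊆ T) {u v : ι} (h : Reach H S u v) :
    Reach H T u v := by
  refine Relation.ReflTransGen.mono ?_ _ _ h
  rintro a b ⟨h1, h2, h3⟩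
  exact ⟨h1, hST h2, hST h3⟩

noncomputable def comp (S : Finset ι) (v : ι) : Finset ι :=
  S.filter (fun w => Reach H S v w)

lemma comp_subset {S : Finset ι} {v : ι} : comp H S v ⊆ S := Finset.filter_subset _ _

lemma mem_comp_self {S : Finset ι} {v : ι} (hv : v ∈ S) : v ∈ comp H S v := by
  simp only [comp, Finset.mem_filter]
  exact ⟨hv, Relation.ReflTransGen.refl⟩

lemma comp_closed {S : Finset ι} {v u w : ι} (hu : u ∈ comp H S v) (hw : w ∈ S)
    (hadj : H.Adj u w) : w ∈ comp H S v := by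
  simp only [comp, Finset.mem_filter] at hu ⊢
  exact ⟨hw, hu.2.trans (Relation.ReflTransGen.single ⟨hadj, hu.1, hw⟩)⟩

lemma reach_in_comp {S : Finset ι} {v u : ι} (h : Reach H S v u) (hv : v ∈ S) :
    Reach H (comp H S v) v u := by
  induction h with
  | refl => exact Relation.ReflTransGen.refl
  | @tail b c hb hstep ih =>
    have hbc : b ∈ comp H S v := by
      simp only [comp, Finset.mem_filter]
      exact ⟨hstep.2.1, hb⟩
    have hcc : c ∈ comp H S v := comp_closed H hbc hstep.2.2 hstep.1
    exact ih.tail ⟨hstep.1, hbc, hcc⟩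

lemma comp_connected {S : Finset ι} {v u w : ι} (hu : u ∈ comp H S v)
    (hw : w ∈ comp H S v) : Reach H (comp H S v) u w := by
  have hv : v ∈ S := by
    by_contra hvn
    simp only [comp, Finset.mem_filter] at hu
    rcases hu.2.cases_head with h | ⟨c, hc, _⟩
    · exact hvn (h ▸ hu.1)
    · exact hvn hc.2.1
  simp only [comp, Finset.mem_filter] at hu hw
  exact (reach_symm H (reach_in_comp H hu.2 hv)).trans (reach_in_comp H hw.2 hv)

/-! ### The decomposition predicate -/

def Decomp (S : Finset ι) : Prop :=
  ∃ (t : ℕ) (B : Fin t → Finset ι),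
    (∀ i, B i ⊆ S) ∧
    (∀ v ∈ S, ∃! i, v ∈ B i) ∧
    (∀ i, (∃ m, Nonempty (H.induce (B i : Set ι) ≃g SimpleGraph.pathGraph m)) ∨
      (∃ m, 6 ≤ m ∧ Nonempty (H.induce (B i : Set ι) ≃g SimpleGraph.cycleGraph m))) ∧
    (∀ i, ∀ v ∈ B i, Set.ncard {w : ι | H.Adj v w ∧ ∃ j, j < i ∧ w ∈ B j} ≤ 1)

lemma decomp_empty : Decomp H (∅ : Finset ι) := by
  refine ⟨0, Fin.elim0, fun i => i.elim0, ?_, fun i => i.elim0, fun i => i.elim0⟩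
  intro v hv
  simp at hv

lemma decomp_append {S B : Finset ι} (hBS : B ⊆ S)
    (hshape : (∃ m, Nonempty (H.induce (B : Set ι) ≃g SimpleGraph.pathGraph m)) ∨
      (∃ m, 6 ≤ m ∧ Nonempty (H.induce (B : Set ι) ≃g SimpleGraph.cycleGraph m)))
    (hback : ∀ v ∈ B, ndeg H (S \ B) v ≤ 1)
    (hD : Decomp H (S \ B)) : Decomp H S := by
  obtain ⟨t, Bf, hsub, hpart, hshapes, hb⟩ := hD
  refine ⟨t + 1, Fin.snoc Bf B, ?_, ?_, ?_, ?_⟩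
  · intro i
    refine Fin.lastCases ?_ ?_ i
    · rw [Fin.snoc_last]; exact hBS
    · intro j; rw [Fin.snoc_castSucc]
      exact (hsub j).trans (Finset.sdiff_subset)
  · intro v hv
    by_cases hvB : v ∈ B
    · have h1 : v ∈ (Fin.snoc Bf B : Fin (t+1) → Finset ι) (Fin.last t) := by rw [Fin.snoc_last]; exact hvB
      refine ⟨Fin.last t, h1, ?_⟩
      intro j hj
      rcases Fin.eq_castSucc_or_eq_last j with ⟨j', rfl⟩ | rfl
      · rw [Fin.snoc_castSucc] at hj
        exact absurd ((hsub j') hj) (by simp [hvB])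
      · rfl
    · have hv' : v ∈ S \ B := Finset.mem_sdiff.2 ⟨hv, hvB⟩
      obtain ⟨i₀, hi₀, huniq⟩ := hpart v hv'
      have h1 : v ∈ (Fin.snoc Bf B : Fin (t+1) → Finset ι) i₀.castSucc := by rw [Fin.snoc_castSucc]; exact hi₀
      refine ⟨i₀.castSucc, h1, ?_⟩
      intro j hj
      rcases Fin.eq_castSucc_or_eq_last j with ⟨j', rfl⟩ | rfl
      · rw [Fin.snoc_castSucc] at hj
        rw [huniq j' hj]
      · rw [Fin.snoc_last] at hj
        exact absurd hj hvB
  · intro i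
    refine Fin.lastCases ?_ ?_ i
    · rw [Fin.snoc_last]; exact hshape
    · intro j; rw [Fin.snoc_castSucc]; exact hshapes j
  · intro i
    refine Fin.lastCases ?_ ?_ i
    · rw [Fin.snoc_last]
      intro v hv
      have hsubset : {w : ι | H.Adj v w ∧ ∃ j, j < Fin.last t ∧ w ∈ (Fin.snoc Bf B : Fin (t+1) → Finset ι) j}
          ⊆ ((S \ B).filter (fun w => H.Adj v w) : Finset ι) := by
        rintro w ⟨hadj, j, hjlt, hjw⟩
        rcases Fin.eq_castSucc_or_eq_last j with ⟨j', rfl⟩ | rfl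
        · rw [Fin.snoc_castSucc] at hjw
          simp only [Finset.coe_filter, Set.mem_setOf_eq]
          exact ⟨(hsub j') hjw, hadj⟩
        · exact absurd hjlt (lt_irrefl _)
      calc Set.ncard {w : ι | H.Adj v w ∧ ∃ j, j < Fin.last t ∧ w ∈ (Fin.snoc Bf B : Fin (t+1) → Finset ι) j}
          ≤ Set.ncard (((S \ B).filter (fun w => H.Adj v w) : Finset ι) : Set ι) :=
            Set.ncard_le_ncard hsubset (Finset.finite_toSet _)
        _ = ndeg H (S \ B) v := by rw [Set.ncard_coe_finset]; rfl
        _ ≤ 1 := hback v hv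
    · intro j v hv
      rw [Fin.snoc_castSucc] at hv
      have hseteq : {w : ι | H.Adj v w ∧ ∃ k, k < Fin.castSucc j ∧ w ∈ (Fin.snoc Bf B : Fin (t+1) → Finset ι) k}
          = {w : ι | H.Adj v w ∧ ∃ k, k < j ∧ w ∈ Bf k} := by
        ext w
        simp only [Set.mem_setOf_eq]
        constructor
        · rintro ⟨hadj, k, hklt, hkw⟩
          rcases Fin.eq_castSucc_or_eq_last k with ⟨k', rfl⟩ | rfl
          · rw [Fin.snoc_castSucc] at hkw
            refine ⟨hadj, k', ?_, hkw⟩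
            rw [Fin.lt_def] at hklt ⊢
            simpa using hklt
          · exfalso
            rw [Fin.lt_def] at hklt
            have := j.isLt
            simp only [Fin.val_last, Fin.coe_castSucc] at hklt
            omega
        · rintro ⟨hadj, k, hklt, hkw⟩
          refine ⟨hadj, k.castSucc, ?_, by rw [Fin.snoc_castSucc]; exact hkw⟩
          rw [Fin.lt_def] at hklt ⊢
          simpa using hklt
      rw [hseteq]
      exact hb j v hv


/-! ### The invariant: any 3-regular component has at least 7 vertices -/

def Inv (S : Finset ι) : Prop :=
  ∀ v ∈ S, (∀ u ∈ comp H S v, ndeg H (comp H S v) u = 3) → 7 ≤ (comp H S v).card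

lemma inv_sdiff (hd3 : ∀ (T : Finset ι) (v : ι), ndeg H T v ≤ 3)
    {S : Finset ι} (hInv : Inv H S) (B : Finset ι) : Inv H (S \ B) := by
  intro v hv hreg
  set D := comp H (S \ B) v with hD
  by_cases hclosed : ∀ u ∈ D, ∀ w ∈ S, H.Adj u w → w ∈ D
  · -- D is closed in S, hence equals the S-component of v
    have hvS : v ∈ S := (Finset.mem_sdiff.1 hv).1
    have heq : comp H S v = D := by
      apply Finset.Subset.antisymm
      · intro u hu
        simp only [comp, Finset.mem_filter] at hu
        obtain ⟨huS, hr⟩ := hu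
        clear huS
        induction hr with
        | refl => exact mem_comp_self H hv
        | @tail b c hb hstep ih => exact hclosed b ih c hstep.2.2 hstep.1
      · intro u hu
        simp only [hD, comp, Finset.mem_filter] at hu ⊢
        exact ⟨(Finset.mem_sdiff.1 hu.1).1,
          reach_mono H (Finset.sdiff_subset) hu.2⟩
    have := hInv v hvS
    rw [heq] at this
    exact this hreg
  · push_neg at hclosed
    obtain ⟨u, huD, w, hwS, hadj, hwD⟩ := hclosed
    exfalso
    have h1 : (D.filter (fun x => H.Adj u x)) ∪ {w} ⊆ S.filter (fun x => H.Adj u x) := by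
      intro x hx
      rcases Finset.mem_union.1 hx with hx | hx
      · rw [Finset.mem_filter] at hx ⊢
        exact ⟨(Finset.mem_sdiff.1 (comp_subset H hx.1)).1, hx.2⟩
      · rw [Finset.mem_singleton] at hx
        subst hx
        exact Finset.mem_filter.2 ⟨hwS, hadj⟩
    have h2 : (D.filter (fun x => H.Adj u x) ∪ {w}).card = ndeg H D u + 1 := by
      rw [Finset.card_union_of_disjoint, Finset.card_singleton]
      · rfl
      · simp only [Finset.disjoint_singleton_right, Finset.mem_filter]
        exact fun h => hwD h.1
    have h3 := Finset.card_le_card h1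
    rw [h2, hreg u huD] at h3
    have := hd3 S u
    unfold ndeg at this
    omega

/-! ### Helpers for the key lemma -/

lemma filter_sdiff_eq (C B : Finset ι) (P : ι → Prop) :
    (C \ B).filter (fun w => P w) = (C.filter (fun w => P w)) \ B := by
  ext x
  simp only [Finset.mem_filter, Finset.mem_sdiff]
  tauto

lemma block_deg_two {C B : Finset ι} {v a b : ι} (hBC : B ⊆ C)
    (ha : a ∈ B) (hb : b ∈ B) (hab : a ≠ b) (hav : H.Adj v a) (hbv : H.Adj v b)
    (h3 : ndeg H C v ≤ 3) : ndeg H (C \ B) v ≤ 1 := by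
  have hsplit := ndeg_split H C B hBC v
  have hsub : ({a, b} : Finset ι) ⊆ B.filter (fun w => H.Adj v w) := by
    intro x hx
    rcases Finset.mem_insert.1 hx with rfl | hx
    · exact Finset.mem_filter.2 ⟨ha, hav⟩
    · rw [Finset.mem_singleton] at hx; subst hx
      exact Finset.mem_filter.2 ⟨hb, hbv⟩
  have hcard : 2 ≤ ndeg H B v := by
    calc 2 = ({a, b} : Finset ι).card := (Finset.card_pair hab).symm
    _ ≤ _ := Finset.card_le_card hsub
  omega

lemma block_deg_one {C B : Finset ι} {v a : ι} (hBC : B ⊆ C)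
    (ha : a ∈ B) (hav : H.Adj v a) (h2 : ndeg H C v ≤ 2) : ndeg H (C \ B) v ≤ 1 := by
  have hsplit := ndeg_split H C B hBC v
  have hcard : 1 ≤ ndeg H B v := by
    refine Finset.card_pos.2 ⟨a, Finset.mem_filter.2 ⟨ha, hav⟩⟩
  omega

lemma path_card_bound {C : Finset ι} {m : ℕ} {f : ℕ → ι} (h : IsIndPath H C m f) :
    m ≤ C.card := by
  obtain ⟨hmem, hinj, -⟩ := h
  have himg : (Finset.range m).image f ⊆ C := by
    intro x hx
    obtain ⟨i, hi, rfl⟩ := Finset.mem_image.1 hx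
    exact hmem i (Finset.mem_range.1 hi)
  have hcard : ((Finset.range m).image f).card = m := by
    rw [Finset.card_image_of_injOn, Finset.card_range]
    intro i hi j hj hij
    exact hinj i (Finset.mem_range.1 hi) j (Finset.mem_range.1 hj) hij
  calc m = _ := hcard.symm
  _ ≤ C.card := Finset.card_le_card himg

lemma path_reverse {C : Finset ι} {m : ℕ} {f : ℕ → ι} (h : IsIndPath H C m f) :
    IsIndPath H C m (fun i => f (m - 1 - i)) := by
  obtain ⟨hmem, hinj, hadj⟩ := h
  refine ⟨fun i hi => hmem _ (by omega), fun i hi j hj hij => ?_, fun i hi j hj => ?_⟩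
  · have := hinj (m - 1 - i) (by omega) (m - 1 - j) (by omega) hij
    omega
  · rw [hadj (m - 1 - i) (by omega) (m - 1 - j) (by omega)]
    omega

lemma path_two {C : Finset ι} {u w : ι} (hu : u ∈ C) (hw : w ∈ C) (huw : H.Adj u w) :
    IsIndPath H C 2 (fun i => if i = 0 then u else w) := by
  have hne : u ≠ w := huw.ne
  refine ⟨fun i hi => ?_, fun i hi j hj hij => ?_, fun i hi j hj => ?_⟩
  · interval_cases i <;> simp [hu, hw]
  · interval_cases i <;> interval_cases j <;> simp_all
  · interval_cases i <;> interval_cases j <;>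
      simp [huw, huw.symm, H.irrefl]

/-- In the case of a long minimal chord we obtain an induced cycle block. -/
lemma cycle_block (hd3 : ∀ (T : Finset ι) (v : ι), ndeg H T v ≤ 3)
    {C : Finset ι} {M : ℕ} {f : ℕ → ι} (hf : IsIndPath H C M f)
    {y : ι} {i₀ : ℕ} (hyC : y ∈ C) (hy0 : H.Adj (f 0) y)
    (hyim : ∀ i < M, f i ≠ y) (hchord : H.Adj y (f i₀))
    (hmin : ∀ k, 1 ≤ k → k < i₀ → ¬H.Adj y (f k)) (h4 : 4 ≤ i₀) (hiM : i₀ < M) :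
    ∃ B : Finset ι, B.Nonempty ∧ B ⊆ C ∧ (∀ v ∈ B, ndeg H (C \ B) v ≤ 1) ∧
      ((∃ m g, IsIndPath H C m g ∧ (∀ x, x ∈ B ↔ ∃ i < m, g i = x)) ∨
       (∃ m g, 6 ≤ m ∧ IsIndCycle H C m g ∧ (∀ x, x ∈ B ↔ ∃ i < m, g i = x))) := by
  obtain ⟨hmem, hinj, hadj⟩ := hf
  set m := i₀ + 2 with hm
  set g : ℕ → ι := fun j => if j ≤ i₀ then f j else y with hg
  have hgmem : ∀ j < m, g j ∈ C := by
    intro j hj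
    by_cases h : j ≤ i₀ <;> simp only [hg, h, if_true, if_false]
    · exact hmem j (by omega)
    · exact hyC
  have hginj : ∀ i < m, ∀ j < m, g i = g j → i = j := by
    intro i hi j hj hij
    by_cases h1 : i ≤ i₀ <;> by_cases h2 : j ≤ i₀ <;>
      simp only [hg, h1, h2, if_true, if_false] at hij
    · exact hinj i (by omega) j (by omega) hij
    · exact absurd hij (hyim i (by omega))
    · exact absurd hij.symm (hyim j (by omega))
    · omega
  have hcyc : IsIndCycle H C m g := by
    refine ⟨hgmem, hginj, ?_⟩
    intro i hi j hj
    by_cases h1 : i ≤ i₀ <;> by_cases h2 : j ≤ i₀ <;>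
      simp only [hg, h1, h2, if_true, if_false]
    · rw [hadj i (by omega) j (by omega)]
      omega
    · -- j = i₀ + 1, i ≤ i₀ : Adj (f i) y
      have hj' : j = i₀ + 1 := by omega
      subst hj'
      constructor
      · intro ha
        rcases Nat.eq_or_lt_of_le h1 with h | h
        · left; omega
        · rcases Nat.eq_zero_or_pos i with rfl | hpos
          · right; right; left; exact ⟨rfl, by omega⟩
          · exact absurd ha.symm (hmin i (by omega) (by omega))
      · rintro (h | h | ⟨h, h'⟩ | ⟨h, h'⟩)
        · have : i = i₀ := by omega
          subst this
          exact hchord.symm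
        · omega
        · subst h; exact hy0
        · omega
    · have hi' : i = i₀ + 1 := by omega
      subst hi'
      constructor
      · intro ha
        rcases Nat.eq_or_lt_of_le h2 with h | h
        · right; left; omega
        · rcases Nat.eq_zero_or_pos j with rfl | hpos
          · right; right; right; exact ⟨rfl, by omega⟩
          · exact absurd ha (hmin j (by omega) (by omega))
      · rintro (h | h | ⟨h, h'⟩ | ⟨h, h'⟩)
        · omega
        · have : j = i₀ := by omega
          subst this
          exact hchord
        · omega
        · subst h; exact hy0.symm
    · constructor
      · intro ha; exact absurd ha (H.irrefl)
      · intro ha; omega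
  refine ⟨(Finset.range m).image g, ⟨g 0, Finset.mem_image.2 ⟨0, Finset.mem_range.2 (by omega), rfl⟩⟩,
    ?_, ?_, Or.inr ⟨m, g, by omega, hcyc, ?_⟩⟩
  · intro x hx
    obtain ⟨i, hi, rfl⟩ := Finset.mem_image.1 hx
    exact hgmem i (Finset.mem_range.1 hi)
  · intro v hv
    obtain ⟨i, hi, rfl⟩ := Finset.mem_image.1 hv
    rw [Finset.mem_range] at hi
    -- two distinct neighbours of g i inside the block
    have hccadj := hcyc.2.2
    have hex : ∃ a b, a < m ∧ b < m ∧ a ≠ b ∧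
        (i + 1 = a ∨ a + 1 = i ∨ (i = 0 ∧ a + 1 = m) ∨ (a = 0 ∧ i + 1 = m)) ∧
        (i + 1 = b ∨ b + 1 = i ∨ (i = 0 ∧ b + 1 = m) ∨ (b = 0 ∧ i + 1 = m)) := by
      rcases Nat.eq_zero_or_pos i with rfl | hpos
      · exact ⟨1, m - 1, by omega, by omega, by omega, by omega, by omega⟩
      · by_cases hlast : i + 1 = m
        · exact ⟨i - 1, 0, by omega, by omega, by omega, by omega, by omega⟩
        · exact ⟨i + 1, i - 1, by omega, by omega, by omega, by omega, by omega⟩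
    obtain ⟨a, b, haM, hbM, hane, hca, hcb⟩ := hex
    have hadja : H.Adj (g i) (g a) := by rw [hccadj i hi a haM]; exact hca
    have hadjb : H.Adj (g i) (g b) := by rw [hccadj i hi b hbM]; exact hcb
    have hne : g a ≠ g b := fun h => hane (hginj a haM b hbM h)
    refine block_deg_two H ?_ (Finset.mem_image.2 ⟨a, Finset.mem_range.2 haM, rfl⟩)
      (Finset.mem_image.2 ⟨b, Finset.mem_range.2 hbM, rfl⟩) hne hadja hadjb (hd3 C _)
    intro x hx
    obtain ⟨k, hk, rfl⟩ := Finset.mem_image.1 hx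
    exact hgmem k (Finset.mem_range.1 hk)
  · intro x
    simp only [Finset.mem_image, Finset.mem_range]

lemma path_three {C : Finset ι} {a b d : ι} (ha : a ∈ C) (hb : b ∈ C) (hd : d ∈ C)
    (hab : H.Adj a b) (hbd : H.Adj b d) (had : ¬H.Adj a d) (hnad : a ≠ d) :
    IsIndPath H C 3 (fun i => if i = 0 then a else if i = 1 then b else d) := by
  have nab := hab.ne
  have nbd := hbd.ne
  have hda : ¬H.Adj d a := fun h => had h.symm
  refine ⟨?_, ?_, ?_⟩
  · intro i hi; interval_cases i <;> simp [ha, hb, hd]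
  · intro i hi j hj hij
    interval_cases i <;> interval_cases j <;> simp_all
  · intro i hi j hj
    interval_cases i <;> interval_cases j <;>
      simp_all [H.irrefl, hab.symm, hbd.symm]

lemma path_four {C : Finset ι} {a b d e : ι} (ha : a ∈ C) (hb : b ∈ C) (hd : d ∈ C)
    (he : e ∈ C) (hab : H.Adj a b) (hbd : H.Adj b d) (hde : H.Adj d e)
    (had : ¬H.Adj a d) (hbe : ¬H.Adj b e) (hae : ¬H.Adj a e)
    (h1 : a ≠ d) (h2 : b ≠ e) (h3 : a ≠ e) :
    IsIndPath H C 4 (fun i => if i = 0 then a else if i = 1 then b else if i = 2 then d else e) := by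
  have nab := hab.ne
  have nbd := hbd.ne
  have nde := hde.ne
  have hda : ¬H.Adj d a := fun h => had h.symm
  have heb : ¬H.Adj e b := fun h => hbe h.symm
  have hea : ¬H.Adj e a := fun h => hae h.symm
  refine ⟨?_, ?_, ?_⟩
  · intro i hi; interval_cases i <;> simp [ha, hb, hd, he]
  · intro i hi j hj hij
    interval_cases i <;> interval_cases j <;> simp_all
  · intro i hi j hj
    interval_cases i <;> interval_cases j <;>
      simp_all [H.irrefl, hab.symm, hbd.symm, hde.symm]

lemma card_three {a b d : ι} (h1 : a ≠ b) (h2 : a ≠ d) (h3 : b ≠ d) :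
    ({a, b, d} : Finset ι).card = 3 := by
  rw [Finset.card_insert_of_notMem (by simp [h1, h2]),
    Finset.card_insert_of_notMem (by simp [h3]), Finset.card_singleton]

/-! ### The key lemma : a removable block in a connected piece -/

lemma key_aux (hd3 : ∀ (T : Finset ι) (v : ι), ndeg H T v ≤ 3)
    {c : ι → Bool} (hc : ∀ a b : ι, H.Adj a b → c a ≠ c b)
    {C : Finset ι}
    (hconn : ∀ u ∈ C, ∀ w ∈ C, Reach H C u w)
    (hK : (∀ u ∈ C, ndeg H C u = 3) → 7 ≤ C.card)
    {M : ℕ} {f : ℕ → ι} (hf : IsIndPath H C M f) (hM2 : 2 ≤ M)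
    (hmax : ¬∃ g, IsIndPath H C (M + 1) g)
    (hdeg0 : ndeg H C (f 0) = 3) :
    ∃ B : Finset ι, B.Nonempty ∧ B ⊆ C ∧ (∀ v ∈ B, ndeg H (C \ B) v ≤ 1) ∧
      ((∃ m g, IsIndPath H C m g ∧ (∀ x, x ∈ B ↔ ∃ i < m, g i = x)) ∨
       (∃ m g, 6 ≤ m ∧ IsIndCycle H C m g ∧ (∀ x, x ∈ B ↔ ∃ i < m, g i = x))) := by
  obtain ⟨hmem, hinj, hadj⟩ := hf
  have hbool : ∀ a b : Bool, a ≠ b → b = !a := by decide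
  have hstep : ∀ i, i + 1 < M → H.Adj (f i) (f (i + 1)) :=
    fun i h => (hadj i (by omega) (i + 1) (by omega)).2 (by omega)
  have hnotim : ∀ y, H.Adj (f 0) y → y ≠ f 1 → ∀ i < M, f i ≠ y := by
    intro y hy hy1 i hi hiy
    rw [← hiy] at hy
    have := (hadj 0 (by omega) i hi).1 hy
    have hi1 : i = 1 := by omega
    rw [hi1] at hiy
    exact hy1 hiy.symm
  have hpar : ∀ i < M, c (f i) = (if i % 2 = 0 then c (f 0) else !(c (f 0))) := by
    intro i
    induction i with
    | zero => intro _; simp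
    | succ k ih =>
      intro h
      have hk := ih (by omega)
      have hne : c (f (k + 1)) = !(c (f k)) := hbool _ _ (hc _ _ (hstep k (by omega)))
      by_cases hk2 : k % 2 = 0
      · rw [if_pos hk2] at hk
        rw [if_neg (by omega), hne, hk]
      · rw [if_neg hk2] at hk
        rw [if_pos (by omega), hne, hk, Bool.not_not]
  -- extract the two other neighbours p, q of f 0
  have hf1mem : f 1 ∈ C.filter (fun w => H.Adj (f 0) w) :=
    Finset.mem_filter.2 ⟨hmem 1 (by omega), hstep 0 (by omega)⟩
  have hcard2 : ((C.filter (fun w => H.Adj (f 0) w)).erase (f 1)).card = 2 := by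
    rw [Finset.card_erase_of_mem hf1mem]
    have : (C.filter (fun w => H.Adj (f 0) w)).card = 3 := hdeg0
    omega
  obtain ⟨p, q, hpq, hset⟩ := Finset.card_eq_two.1 hcard2
  have hpfacts : p ≠ f 1 ∧ p ∈ C ∧ H.Adj (f 0) p := by
    have hp : p ∈ (C.filter (fun w => H.Adj (f 0) w)).erase (f 1) := by
      rw [hset]; simp
    rw [Finset.mem_erase, Finset.mem_filter] at hp
    exact ⟨hp.1, hp.2.1, hp.2.2⟩
  have hqfacts : q ≠ f 1 ∧ q ∈ C ∧ H.Adj (f 0) q := by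
    have hq : q ∈ (C.filter (fun w => H.Adj (f 0) w)).erase (f 1) := by
      rw [hset]; simp
    rw [Finset.mem_erase, Finset.mem_filter] at hq
    exact ⟨hq.1, hq.2.1, hq.2.2⟩
  obtain ⟨hp1, hpC, hp0⟩ := hpfacts
  obtain ⟨hq1, hqC, hq0⟩ := hqfacts
  have hcp : c p = !(c (f 0)) := hbool _ _ (hc _ _ hp0)
  have hcq : c q = !(c (f 0)) := hbool _ _ (hc _ _ hq0)
  have hcf1 : c (f 1) = !(c (f 0)) := by
    have := hpar 1 (by omega); simpa using this
  -- every further neighbour of f 0 has a chord into the path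
  have hext : ∀ y, y ∈ C → H.Adj (f 0) y → y ≠ f 1 →
      ∃ i, 2 ≤ i ∧ i < M ∧ H.Adj y (f i) := by
    intro y hyC hy0 hy1
    by_contra hno
    push_neg at hno
    have hcy : c y = !(c (f 0)) := hbool _ _ (hc _ _ hy0)
    apply hmax
    refine ⟨fun i => if i = 0 then y else f (i - 1), ?_, ?_, ?_⟩
    · intro i hi
      by_cases h : i = 0 <;> simp only [h, if_true, if_false]
      · exact hyC
      · exact hmem (i - 1) (by omega)
    · intro i hi j hj hij
      by_cases h1 : i = 0 <;> by_cases h2 : j = 0 <;>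
        simp only [h1, h2, if_true, if_false] at hij
      · omega
      · exact absurd hij.symm (hnotim y hy0 hy1 (j - 1) (by omega))
      · exact absurd hij (hnotim y hy0 hy1 (i - 1) (by omega))
      · have := hinj (i - 1) (by omega) (j - 1) (by omega) hij
        omega
    · intro i hi j hj
      by_cases h1 : i = 0 <;> by_cases h2 : j = 0 <;>
        simp only [h1, h2, if_true, if_false]
      · subst h1; subst h2; simp [H.irrefl]
      · constructor
        · intro ha
          by_contra hcon
          push_neg at hcon
          have hj1 : j ≠ 1 := by omega
          rcases Nat.lt_or_ge (j - 1) 2 with hlt | hge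
          · have hj2 : j - 1 = 1 := by omega
            rw [hj2] at ha
            exact (hc _ _ ha) (by rw [hcy, hcf1])
          · exact hno (j - 1) hge (by omega) ha
        · intro hor
          have hj1 : j = 1 := by omega
          subst hj1
          simpa using hy0.symm
      · constructor
        · intro ha
          by_contra hcon
          push_neg at hcon
          have hi1 : i ≠ 1 := by omega
          rcases Nat.lt_or_ge (i - 1) 2 with hlt | hge
          · have hi2 : i - 1 = 1 := by omega
            rw [hi2] at ha
            exact (hc _ _ ha.symm) (by rw [hcy, hcf1])
          · exact hno (i - 1) hge (by omega) ha.symm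
        · intro hor
          have hi1 : i = 1 := by omega
          subst hi1
          simpa using hy0
      · rw [hadj (i - 1) (by omega) (j - 1) (by omega)]
        omega
  -- for each of p, q : either we are done (long-chord cycle) or it attaches to f 2
  have hchord2 : ∀ y, y ∈ C → H.Adj (f 0) y → y ≠ f 1 →
      (∃ B : Finset ι, B.Nonempty ∧ B ⊆ C ∧ (∀ v ∈ B, ndeg H (C \ B) v ≤ 1) ∧
        ((∃ m g, IsIndPath H C m g ∧ (∀ x, x ∈ B ↔ ∃ i < m, g i = x)) ∨
         (∃ m g, 6 ≤ m ∧ IsIndCycle H C m g ∧ (∀ x, x ∈ B ↔ ∃ i < m, g i = x)))) ∨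
      (H.Adj y (f 2) ∧ 3 ≤ M) := by
    intro y hyC hy0 hy1
    have hcy : c y = !(c (f 0)) := hbool _ _ (hc _ _ hy0)
    obtain ⟨i₁, hi₁⟩ := hext y hyC hy0 hy1
    have hfind : ∃ i, 2 ≤ i ∧ i < M ∧ H.Adj y (f i) := ⟨i₁, hi₁⟩
    obtain ⟨h2i, hiM, hchord⟩ := Nat.find_spec hfind
    have hmin : ∀ k, 1 ≤ k → k < Nat.find hfind → ¬H.Adj y (f k) := by
      intro k h1k hki₀ hadjk
      rcases Nat.lt_or_ge k 2 with h | h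
      · have : k = 1 := by omega
        subst this
        exact (hc _ _ hadjk) (by rw [hcy, hcf1])
      · exact Nat.find_min hfind hki₀ ⟨h, by omega, hadjk⟩
    have heven : Nat.find hfind % 2 = 0 := by
      by_contra hodd
      have := hpar (Nat.find hfind) (by omega)
      rw [if_neg hodd] at this
      exact (hc _ _ hchord) (by rw [hcy, this])
    rcases Nat.lt_or_ge (Nat.find hfind) 4 with hlt | hge
    · right
      have h2 : Nat.find hfind = 2 := by omega
      rw [h2] at hchord
      exact ⟨hchord, by omega⟩
    · left
      exact cycle_block H hd3 ⟨hmem, hinj, hadj⟩ hyC hy0 (hnotim y hy0 hy1) hchord hmin hge hiM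
  rcases hchord2 p hpC hp0 hp1 with hdone | ⟨hp2, hM3⟩
  · exact hdone
  rcases hchord2 q hqC hq0 hq1 with hdone | ⟨hq2, -⟩
  · exact hdone
  -- the path must have exactly three vertices
  have n1p : f 1 ≠ p := fun h => hp1 h.symm
  have n1q : f 1 ≠ q := fun h => hq1 h.symm
  have hMeq : M = 3 := by
    by_contra hM4'
    have hM4 : 4 ≤ M := by omega
    have hsub : ({f 1, f 3, p, q} : Finset ι) ⊆ C.filter (fun w => H.Adj (f 2) w) := by
      intro x hx
      simp only [Finset.mem_insert, Finset.mem_singleton] at hx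
      rcases hx with rfl | rfl | rfl | rfl
      · exact Finset.mem_filter.2 ⟨hmem 1 (by omega), (hadj 2 (by omega) 1 (by omega)).2 (by omega)⟩
      · exact Finset.mem_filter.2 ⟨hmem 3 (by omega), (hadj 2 (by omega) 3 (by omega)).2 (by omega)⟩
      · exact Finset.mem_filter.2 ⟨hpC, hp2.symm⟩
      · exact Finset.mem_filter.2 ⟨hqC, hq2.symm⟩
    have hc4 : ({f 1, f 3, p, q} : Finset ι).card = 4 := by
      have n13 : f 1 ≠ f 3 := fun h => by have := hinj 1 (by omega) 3 (by omega) h; omega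
      have n3p : f 3 ≠ p := hnotim p hp0 hp1 3 (by omega)
      have n3q : f 3 ≠ q := hnotim q hq0 hq1 3 (by omega)
      rw [Finset.card_insert_of_notMem (by simp [n13, n1p, n1q]),
        Finset.card_insert_of_notMem (by simp [n3p, n3q]),
        Finset.card_pair hpq]
    have hle := Finset.card_le_card hsub
    have hd2 : (C.filter (fun w => H.Adj (f 2) w)).card ≤ 3 := hd3 C (f 2)
    omega
  -- neighbour sets of the two endpoints
  have hN0 : C.filter (fun w => H.Adj (f 0) w) = {f 1, p, q} := by
    rw [← Finset.insert_erase hf1mem, hset]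
  have hN2 : C.filter (fun w => H.Adj (f 2) w) = {f 1, p, q} := by
    have hsub : ({f 1, p, q} : Finset ι) ⊆ C.filter (fun w => H.Adj (f 2) w) := by
      intro x hx
      simp only [Finset.mem_insert, Finset.mem_singleton] at hx
      rcases hx with rfl | rfl | rfl
      · exact Finset.mem_filter.2 ⟨hmem 1 (by omega), (hadj 2 (by omega) 1 (by omega)).2 (by omega)⟩
      · exact Finset.mem_filter.2 ⟨hpC, hp2.symm⟩
      · exact Finset.mem_filter.2 ⟨hqC, hq2.symm⟩
    have hcc : ({f 1, p, q} : Finset ι).card = 3 := card_three n1p n1q hpq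
    exact (Finset.eq_of_subset_of_card_le hsub (by rw [hcc]; exact hd3 C (f 2))).symm
  have hcf2 : c (f 2) = c (f 0) := by
    have := hpar 2 (by omega); simpa using this
  subst hMeq
  have n01 : f 0 ≠ f 1 := fun h => by have := hinj 0 (by omega) 1 (by omega) h; omega
  have n02 : f 0 ≠ f 2 := fun h => by have := hinj 0 (by omega) 2 (by omega) h; omega
  have n12 : f 1 ≠ f 2 := fun h => by have := hinj 1 (by omega) 2 (by omega) h; omega
  have n0p : f 0 ≠ p := hp0.ne
  have n0q : f 0 ≠ q := hq0.ne
  have n2p : f 2 ≠ p := hnotim p hp0 hp1 2 (by omega)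
  have n2q : f 2 ≠ q := hnotim q hq0 hq1 2 (by omega)
  by_cases hr : ∃ r, r ∈ C ∧ H.Adj (f 1) r ∧ r ≠ f 0 ∧ r ≠ f 2
  · -- the component is a six-vertex 3-regular graph : contradiction
    exfalso
    obtain ⟨r, hrC, hr1, hr0, hr2⟩ := hr
    have hcr : c r = c (f 0) := by
      have h1 := hbool _ _ (hc _ _ hr1)
      rw [hcf1, Bool.not_not] at h1
      exact h1
    have nrp : r ≠ p := by
      intro h; rw [h, hcp] at hcr; simp at hcr
    have nrq : r ≠ q := by
      intro h; rw [h, hcq] at hcr; simp at hcr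
    have hradj : ∀ y, y ∈ C → H.Adj (f 0) y → y ≠ f 1 → y ≠ r → H.Adj r y := by
      intro y hyC hy0 hy1 hyr
      have hcy : c y = !(c (f 0)) := hbool _ _ (hc _ _ hy0)
      by_contra hnry
      apply hmax
      refine ⟨_, path_four H hrC (hmem 1 (by omega)) (hmem 0 (by omega)) hyC
        hr1.symm (hstep 0 (by omega)).symm hy0
        (fun h => hc _ _ h (by rw [hcr])) (fun h => hc _ _ h (by rw [hcf1, hcy]))
        hnry hr0 (fun h => hy1 h.symm) (fun h => hyr h.symm)⟩
    have hrp := hradj p hpC hp0 hp1 (fun h => nrp h.symm)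
    have hrq := hradj q hqC hq0 hq1 (fun h => nrq h.symm)
    have hN1 : C.filter (fun w => H.Adj (f 1) w) = {f 0, f 2, r} := by
      have hsub : ({f 0, f 2, r} : Finset ι) ⊆ C.filter (fun w => H.Adj (f 1) w) := by
        intro x hx
        simp only [Finset.mem_insert, Finset.mem_singleton] at hx
        rcases hx with rfl | rfl | rfl
        · exact Finset.mem_filter.2 ⟨hmem 0 (by omega), (hstep 0 (by omega)).symm⟩
        · exact Finset.mem_filter.2 ⟨hmem 2 (by omega), hstep 1 (by omega)⟩
        · exact Finset.mem_filter.2 ⟨hrC, hr1⟩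
      have hcc : ({f 0, f 2, r} : Finset ι).card = 3 :=
        card_three n02 (Ne.symm hr0) (Ne.symm hr2)
      exact (Finset.eq_of_subset_of_card_le hsub (by rw [hcc]; exact hd3 C (f 1))).symm
    have hNp : C.filter (fun w => H.Adj p w) = {f 0, f 2, r} := by
      have hsub : ({f 0, f 2, r} : Finset ι) ⊆ C.filter (fun w => H.Adj p w) := by
        intro x hx
        simp only [Finset.mem_insert, Finset.mem_singleton] at hx
        rcases hx with rfl | rfl | rfl
        · exact Finset.mem_filter.2 ⟨hmem 0 (by omega), hp0.symm⟩
        · exact Finset.mem_filter.2 ⟨hmem 2 (by omega), hp2⟩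
        · exact Finset.mem_filter.2 ⟨hrC, hrp.symm⟩
      have hcc : ({f 0, f 2, r} : Finset ι).card = 3 :=
        card_three n02 (Ne.symm hr0) (Ne.symm hr2)
      exact (Finset.eq_of_subset_of_card_le hsub (by rw [hcc]; exact hd3 C p)).symm
    have hNq : C.filter (fun w => H.Adj q w) = {f 0, f 2, r} := by
      have hsub : ({f 0, f 2, r} : Finset ι) ⊆ C.filter (fun w => H.Adj q w) := by
        intro x hx
        simp only [Finset.mem_insert, Finset.mem_singleton] at hx
        rcases hx with rfl | rfl | rfl
        · exact Finset.mem_filter.2 ⟨hmem 0 (by omega), hq0.symm⟩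
        · exact Finset.mem_filter.2 ⟨hmem 2 (by omega), hq2⟩
        · exact Finset.mem_filter.2 ⟨hrC, hrq.symm⟩
      have hcc : ({f 0, f 2, r} : Finset ι).card = 3 :=
        card_three n02 (Ne.symm hr0) (Ne.symm hr2)
      exact (Finset.eq_of_subset_of_card_le hsub (by rw [hcc]; exact hd3 C q)).symm
    have hNr : C.filter (fun w => H.Adj r w) = {f 1, p, q} := by
      have hsub : ({f 1, p, q} : Finset ι) ⊆ C.filter (fun w => H.Adj r w) := by
        intro x hx
        simp only [Finset.mem_insert, Finset.mem_singleton] at hx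
        rcases hx with rfl | rfl | rfl
        · exact Finset.mem_filter.2 ⟨hmem 1 (by omega), hr1.symm⟩
        · exact Finset.mem_filter.2 ⟨hpC, hrp⟩
        · exact Finset.mem_filter.2 ⟨hqC, hrq⟩
      have hcc : ({f 1, p, q} : Finset ι).card = 3 := card_three n1p n1q hpq
      exact (Finset.eq_of_subset_of_card_le hsub (by rw [hcc]; exact hd3 C r)).symm
    set D : Finset ι := {f 0, f 1, f 2, p, q, r} with hD
    have hDmem : ∀ {S : Finset ι} {z u : ι}, C.filter (fun w => H.Adj z w) = S →
        u ∈ C → H.Adj z u → u ∈ S := by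
      intro S z u hS hu ha
      rw [← hS]
      exact Finset.mem_filter.2 ⟨hu, ha⟩
    have hclose : ∀ b ∈ D, ∀ u ∈ C, H.Adj b u → u ∈ D := by
      intro b hb u hu hadjbu
      simp only [hD, Finset.mem_insert, Finset.mem_singleton] at hb ⊢
      rcases hb with rfl | rfl | rfl | rfl | rfl | rfl
      · have := hDmem hN0 hu hadjbu
        simp only [Finset.mem_insert, Finset.mem_singleton] at this
        tauto
      · have := hDmem hN1 hu hadjbu
        simp only [Finset.mem_insert, Finset.mem_singleton] at this
        tauto
      · have := hDmem hN2 hu hadjbu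
        simp only [Finset.mem_insert, Finset.mem_singleton] at this
        tauto
      · have := hDmem hNp hu hadjbu
        simp only [Finset.mem_insert, Finset.mem_singleton] at this
        tauto
      · have := hDmem hNq hu hadjbu
        simp only [Finset.mem_insert, Finset.mem_singleton] at this
        tauto
      · have := hDmem hNr hu hadjbu
        simp only [Finset.mem_insert, Finset.mem_singleton] at this
        tauto
    have hCD : C ⊆ D := by
      intro u hu
      have hreach := hconn (f 0) (hmem 0 (by omega)) u hu
      clear hu
      induction hreach with
      | refl => simp [hD]
      | @tail b u' hb hstepb ih =>
        exact hclose b ih u' hstepb.2.2 hstepb.1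
    have hcard6 : C.card ≤ 6 := by
      refine le_trans (Finset.card_le_card hCD) ?_
      have h1 := Finset.card_insert_le (f 0) ({f 1, f 2, p, q, r} : Finset ι)
      have h2 := Finset.card_insert_le (f 1) ({f 2, p, q, r} : Finset ι)
      have h3 := Finset.card_insert_le (f 2) ({p, q, r} : Finset ι)
      have h4 := Finset.card_insert_le p ({q, r} : Finset ι)
      have h5 := Finset.card_insert_le q ({r} : Finset ι)
      have h6 : ({r} : Finset ι).card = 1 := Finset.card_singleton r
      simp only [hD]
      omega
    have hreg : ∀ u ∈ C, ndeg H C u = 3 := by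
      intro u hu
      have := hCD hu
      simp only [hD, Finset.mem_insert, Finset.mem_singleton] at this
      unfold ndeg
      rcases this with rfl | rfl | rfl | rfl | rfl | rfl
      · rw [hN0]; exact card_three n1p n1q hpq
      · rw [hN1]; exact card_three n02 (Ne.symm hr0) (Ne.symm hr2)
      · rw [hN2]; exact card_three n1p n1q hpq
      · rw [hNp]; exact card_three n02 (Ne.symm hr0) (Ne.symm hr2)
      · rw [hNq]; exact card_three n02 (Ne.symm hr0) (Ne.symm hr2)
      · rw [hNr]; exact card_three n1p n1q hpq
    have := hK hreg
    omega
  · -- f 1 has no third neighbour : the block {f 1, f 0, p} works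
    push_neg at hr
    have hN1' : C.filter (fun w => H.Adj (f 1) w) = {f 0, f 2} := by
      ext x
      simp only [Finset.mem_filter, Finset.mem_insert, Finset.mem_singleton]
      constructor
      · rintro ⟨hxC, hx⟩
        by_cases h : x = f 0
        · exact Or.inl h
        · exact Or.inr (hr x hxC hx h)
      · rintro (rfl | rfl)
        · exact ⟨hmem 0 (by omega), (hstep 0 (by omega)).symm⟩
        · exact ⟨hmem 2 (by omega), hstep 1 (by omega)⟩
    have hp1adj : ¬H.Adj (f 1) p := by
      intro h
      have : p ∈ C.filter (fun w => H.Adj (f 1) w) := Finset.mem_filter.2 ⟨hpC, h⟩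
      rw [hN1'] at this
      simp only [Finset.mem_insert, Finset.mem_singleton] at this
      rcases this with rfl | rfl
      · exact n0p rfl
      · exact n2p rfl
    have hNp' : C.filter (fun w => H.Adj p w) = {f 0, f 2} := by
      ext x
      simp only [Finset.mem_filter, Finset.mem_insert, Finset.mem_singleton]
      constructor
      · rintro ⟨hxC, hpx⟩
        by_contra hcon
        push_neg at hcon
        obtain ⟨hx0, hx2⟩ := hcon
        have hcx : c x = c (f 0) := by
          have h1 := hbool _ _ (hc _ _ hpx)
          rw [hcp, Bool.not_not] at h1
          exact h1
        have hx1 : ¬H.Adj x (f 1) := by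
          intro h
          have : x ∈ C.filter (fun w => H.Adj (f 1) w) :=
            Finset.mem_filter.2 ⟨hxC, h.symm⟩
          rw [hN1'] at this
          simp only [Finset.mem_insert, Finset.mem_singleton] at this
          tauto
        have hxne1 : x ≠ f 1 := by
          intro h; rw [h, hcf1] at hcx; simp at hcx
        apply hmax
        refine ⟨_, path_four H hxC hpC (hmem 0 (by omega)) (hmem 1 (by omega))
          hpx.symm hp0.symm (hstep 0 (by omega))
          (fun h => hc _ _ h (by rw [hcx])) (fun h => hp1adj h.symm) hx1
          hx0 (Ne.symm n1p) hxne1⟩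
      · rintro (rfl | rfl)
        · exact ⟨hmem 0 (by omega), hp0.symm⟩
        · exact ⟨hmem 2 (by omega), hp2⟩
    set B : Finset ι := {f 1, f 0, p} with hB
    have hBC : B ⊆ C := by
      intro x hx
      simp only [hB, Finset.mem_insert, Finset.mem_singleton] at hx
      rcases hx with rfl | rfl | rfl
      · exact hmem 1 (by omega)
      · exact hmem 0 (by omega)
      · exact hpC
    have houtle : ∀ {v : ι} (S : Finset ι) (y : ι), C.filter (fun w => H.Adj v w) = S →
        S \ B ⊆ {y} → ndeg H (C \ B) v ≤ 1 := by
      intro v S y hS hsub'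
      unfold ndeg
      rw [filter_sdiff_eq, hS]
      calc (S \ B).card ≤ ({y} : Finset ι).card := Finset.card_le_card hsub'
      _ = 1 := Finset.card_singleton y
    refine ⟨B, ⟨f 1, by simp [hB]⟩, hBC, ?_, Or.inl ⟨3,
      (fun i => if i = 0 then f 1 else if i = 1 then f 0 else p),
      path_three H (hmem 1 (by omega)) (hmem 0 (by omega)) hpC
        (hstep 0 (by omega)).symm hp0 hp1adj n1p, ?_⟩⟩
    · intro v hv
      simp only [hB, Finset.mem_insert, Finset.mem_singleton] at hv
      rcases hv with rfl | rfl | rfl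
      · refine houtle _ (f 2) hN1' ?_
        intro x hx
        simp only [hB, Finset.mem_sdiff, Finset.mem_insert, Finset.mem_singleton] at hx
        simp only [Finset.mem_singleton]
        tauto
      · refine houtle _ q hN0 ?_
        intro x hx
        simp only [hB, Finset.mem_sdiff, Finset.mem_insert, Finset.mem_singleton] at hx
        simp only [Finset.mem_singleton]
        tauto
      · refine houtle _ (f 2) hNp' ?_
        intro x hx
        simp only [hB, Finset.mem_sdiff, Finset.mem_insert, Finset.mem_singleton] at hx
        simp only [Finset.mem_singleton]
        tauto
    · intro x
      simp only [hB, Finset.mem_insert, Finset.mem_singleton]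
      constructor
      · rintro (rfl | rfl | rfl)
        · exact ⟨0, by omega, by simp⟩
        · exact ⟨1, by omega, by simp⟩
        · exact ⟨2, by omega, by simp⟩
      · rintro ⟨i, hi, rfl⟩
        interval_cases i <;> simp

lemma key (hd3 : ∀ (T : Finset ι) (v : ι), ndeg H T v ≤ 3)
    (hcol : ∃ c : ι → Bool, ∀ a b : ι, H.Adj a b → c a ≠ c b)
    {C : Finset ι} (hCne : C.Nonempty)
    (hconn : ∀ u ∈ C, ∀ w ∈ C, Reach H C u w)
    (hK : (∀ u ∈ C, ndeg H C u = 3) → 7 ≤ C.card) :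
    ∃ B : Finset ι, B.Nonempty ∧ B ⊆ C ∧ (∀ v ∈ B, ndeg H (C \ B) v ≤ 1) ∧
      ((∃ m f, IsIndPath H C m f ∧ (∀ x, x ∈ B ↔ ∃ i < m, f i = x)) ∨
       (∃ m f, 6 ≤ m ∧ IsIndCycle H C m f ∧ (∀ x, x ∈ B ↔ ∃ i < m, f i = x))) := by
  obtain ⟨c, hc⟩ := hcol
  by_cases hedge : ∃ u ∈ C, ∃ w ∈ C, H.Adj u w
  swap
  · -- no edge : C is a single vertex
    push_neg at hedge
    obtain ⟨v₀, hv₀⟩ := hCne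
    refine ⟨{v₀}, ⟨v₀, Finset.mem_singleton_self v₀⟩, by simpa using hv₀, ?_, ?_⟩
    · intro v hv
      have hempty : C \ {v₀} = ∅ := by
        rw [Finset.eq_empty_iff_forall_notMem]
        intro u hu
        rw [Finset.mem_sdiff, Finset.mem_singleton] at hu
        apply hu.2
        have := hconn u hu.1 v₀ hv₀
        rcases this.cases_head with h | ⟨c', hc', _⟩
        · exact h
        · exact absurd hc'.1 (hedge u hu.1 c' hc'.2.2)
      rw [hempty]
      simp [ndeg]
    · refine Or.inl ⟨1, fun _ => v₀, ⟨fun i _ => hv₀, fun i hi j hj _ => by omega, ?_⟩, ?_⟩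
      · intro i hi j hj
        have : i = 0 ∧ j = 0 := by omega
        obtain ⟨rfl, rfl⟩ := this
        simp [H.irrefl]
      · intro x
        simp only [Finset.mem_singleton]
        constructor
        · rintro rfl; exact ⟨0, by omega, rfl⟩
        · rintro ⟨i, hi, rfl⟩; rfl
  · obtain ⟨u0, hu0, w0, hw0, he⟩ := hedge
    have h2card : 2 ≤ C.card := by
      rw [show (2:ℕ) = 1 + 1 by rfl]
      exact Finset.one_lt_card.2 ⟨u0, hu0, w0, hw0, he.ne⟩
    set P : ℕ → Prop := fun m => ∃ f, IsIndPath H C m f with hP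
    have hP2 : P 2 := ⟨_, path_two H hu0 hw0 he⟩
    set M := Nat.findGreatest P C.card with hM
    have hM2 : 2 ≤ M := Nat.le_findGreatest h2card hP2
    obtain ⟨f, hf⟩ : P M := Nat.findGreatest_spec h2card hP2
    have hmax : ¬ P (M + 1) := by
      rintro ⟨g, hg⟩
      have hb := path_card_bound H hg
      exact Nat.findGreatest_is_greatest (P := P) (n := C.card) (k := M + 1)
        (by omega) (by omega) ⟨g, hg⟩
    by_cases h0 : ndeg H C (f 0) = 3
    · exact key_aux H hd3 hc hconn hK hf hM2 hmax h0
    · by_cases hE : ndeg H C (f (M - 1)) = 3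
      · have hrev := path_reverse H hf
        have : ndeg H C ((fun i => f (M - 1 - i)) 0) = 3 := by simpa using hE
        exact key_aux H hd3 hc hconn hK hrev hM2 hmax this
      · -- both endpoints have degree at most 2 : the path itself is a block
        obtain ⟨hmem, hinj, hadj⟩ := hf
        have h0' : ndeg H C (f 0) ≤ 2 := by have := hd3 C (f 0); omega
        have hE' : ndeg H C (f (M - 1)) ≤ 2 := by have := hd3 C (f (M - 1)); omega
        set B := (Finset.range M).image f with hBdef
        have hBC : B ⊆ C := by
          intro x hx
          obtain ⟨i, hi, rfl⟩ := Finset.mem_image.1 hx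
          exact hmem i (Finset.mem_range.1 hi)
        have hmemB : ∀ i < M, f i ∈ B :=
          fun i hi => Finset.mem_image.2 ⟨i, Finset.mem_range.2 hi, rfl⟩
        refine ⟨B, ⟨f 0, hmemB 0 (by omega)⟩, hBC, ?_,
          Or.inl ⟨M, f, ⟨hmem, hinj, hadj⟩, by intro x; simp [hBdef, Finset.mem_image]⟩⟩
        intro v hv
        obtain ⟨i, hi, rfl⟩ := Finset.mem_image.1 hv
        rw [Finset.mem_range] at hi
        rcases Nat.eq_zero_or_pos i with rfl | hpos
        · exact block_deg_one H hBC (hmemB 1 (by omega))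
            ((hadj 0 (by omega) 1 (by omega)).2 (by omega)) h0'
        · by_cases hilast : i = M - 1
          · subst hilast
            exact block_deg_one H hBC (hmemB (M - 2) (by omega))
              ((hadj (M-1) (by omega) (M-2) (by omega)).2 (by omega)) hE'
          · have hne : f (i - 1) ≠ f (i + 1) := by
              intro h
              have := hinj (i - 1) (by omega) (i + 1) (by omega) h
              omega
            exact block_deg_two H hBC (hmemB (i-1) (by omega)) (hmemB (i+1) (by omega))
              hne ((hadj i (by omega) (i-1) (by omega)).2 (by omega))
              ((hadj i (by omega) (i+1) (by omega)).2 (by omega)) (hd3 C _)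

/-! ### Main induction -/

lemma decomp_of_inv (hd3 : ∀ (T : Finset ι) (v : ι), ndeg H T v ≤ 3)
    (hcol : ∃ c : ι → Bool, ∀ a b : ι, H.Adj a b → c a ≠ c b) :
    ∀ (n : ℕ) (S : Finset ι), S.card ≤ n → Inv H S → Decomp H S := by
  intro n
  induction n with
  | zero =>
    intro S hcard _
    rw [Nat.le_zero, Finset.card_eq_zero] at hcard
    rw [hcard]
    exact decomp_empty H
  | succ n ih =>
    intro S hcard hInv
    rcases Finset.eq_empty_or_nonempty S with rfl | ⟨v₀, hv₀⟩
    · exact decomp_empty H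
    obtain ⟨B, hBne, hBC, hOut, hshape⟩ :=
      key H hd3 hcol ⟨v₀, mem_comp_self H hv₀⟩
        (fun u hu w hw => comp_connected H hu hw) (hInv v₀ hv₀)
    have hBS : B ⊆ S := hBC.trans (comp_subset H)
    -- neighbours of a block vertex within S \ B are within C \ B
    have hback : ∀ v ∈ B, ndeg H (S \ B) v ≤ 1 := by
      intro v hvB
      refine le_trans (Finset.card_le_card ?_) (hOut v hvB)
      intro w hw
      rw [Finset.mem_filter, Finset.mem_sdiff] at hw ⊢
      exact ⟨⟨comp_closed H (hBC hvB) hw.1.1 hw.2, hw.1.2⟩, hw.2⟩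
    have hshape' : (∃ m, Nonempty (H.induce (B : Set ι) ≃g SimpleGraph.pathGraph m)) ∨
        (∃ m, 6 ≤ m ∧ Nonempty (H.induce (B : Set ι) ≃g SimpleGraph.cycleGraph m)) := by
      rcases hshape with ⟨m, f, hp, hBchar⟩ | ⟨m, f, hm, hc, hBchar⟩
      · exact Or.inl ⟨m, path_iso H hp B hBchar⟩
      · exact Or.inr ⟨m, hm, cycle_iso H (by omega) hc B hBchar⟩
    have hlt : (S \ B).card < S.card := by
      apply Finset.card_lt_card
      rw [Finset.ssubset_iff_of_subset (Finset.sdiff_subset)]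
      obtain ⟨b, hb⟩ := hBne
      exact ⟨b, hBS hb, by simp [Finset.mem_sdiff, hb]⟩
    exact decomp_append H hBS hshape' hback
      (ih (S \ B) (by omega) (inv_sdiff H hd3 hInv B))


lemma walk_to_reach {ι : Type*} (H : SimpleGraph ι) [Fintype ι] {u w : ι}
    (p : H.Walk u w) : Reach H Finset.univ u w := by
  induction p with
  | nil => exact Relation.ReflTransGen.refl
  | cons h _ ih =>
    exact Relation.ReflTransGen.head ⟨h, Finset.mem_univ _, Finset.mem_univ _⟩ ih

end BCD

/-- A connected bipartite graph of maximum degree at most three on at least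
seven vertices admits a partition of its vertex set into blocks, each inducing a
path or a cycle of length at least six, such that every vertex of a block has
at most one neighbour in earlier blocks. -/
theorem bipartite_cubic_decomposition {ι : Type*} [Fintype ι] (H : SimpleGraph ι)
    (hconn : H.Connected)
    (hdeg : ∀ v, (H.neighborSet v).ncard ≤ 3)
    (hbip : H.Colorable 2)
    (hcard : 7 ≤ Fintype.card ι) :
    ∃ (t : ℕ) (B : Fin t → Finset ι),
      (∀ v : ι, ∃! i : Fin t, v ∈ B i) ∧
      (∀ i : Fin t,
        (∃ m : ℕ, Nonempty (H.induce (B i : Set ι) ≃g SimpleGraph.pathGraph m)) ∨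
        (∃ m : ℕ, 6 ≤ m ∧
          Nonempty (H.induce (B i : Set ι) ≃g SimpleGraph.cycleGraph m))) ∧
      (∀ i : Fin t, ∀ v ∈ B i,
        Set.ncard {w : ι | H.Adj v w ∧ ∃ j : Fin t, j < i ∧ w ∈ B j} ≤ 1) := by
  classical
  have hd3 : ∀ (T : Finset ι) (v : ι), BCD.ndeg H T v ≤ 3 := by
    intro T v
    have hsub : ((T.filter (fun w => H.Adj v w)) : Set ι) ⊆ H.neighborSet v := by
      intro w hw
      simp only [Finset.coe_filter, Set.mem_setOf_eq] at hw
      exact hw.2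
    have := Set.ncard_le_ncard hsub (Set.toFinite _)
    rw [Set.ncard_coe_finset] at this
    exact this.trans (hdeg v)
  have hcol : ∃ c : ι → Bool, ∀ a b : ι, H.Adj a b → c a ≠ c b := by
    obtain ⟨col⟩ := hbip
    refine ⟨fun v => decide (col v = 0), ?_⟩
    intro a b hab hcontra
    have hne := col.valid hab
    apply hne
    have ha := Fin.exists_fin_two.1 ⟨col a, rfl⟩
    rcases (by omega : (col a : Fin 2) = 0 ∨ col a = 1) with h1 | h1 <;>
      rcases (by omega : (col b : Fin 2) = 0 ∨ col b = 1) with h2 | h2 <;>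
        simp [h1, h2] at hcontra ⊢
  have hInv : BCD.Inv H Finset.univ := by
    intro v _ _
    have huniv : BCD.comp H Finset.univ v = Finset.univ := by
      apply Finset.eq_univ_of_forall
      intro w
      simp only [BCD.comp, Finset.mem_filter, Finset.mem_univ, true_and]
      obtain ⟨p⟩ := hconn.preconnected v w
      exact BCD.walk_to_reach H p
    rw [huniv, Finset.card_univ]
    exact hcard
  obtain ⟨t, B, hsub, hpart, hshape, hb⟩ :=
    BCD.decomp_of_inv H hd3 hcol (Finset.univ.card) Finset.univ le_rfl hInv
  exact ⟨t, B, fun v => hpart v (Finset.mem_univ v), hshape, hb⟩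
end
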